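/- arXiv:2506.01972 — 9 statements merged into one kernel-verified Lean document; each statement's English description precedes it below -/
import Mathlib

section
/- Let α ∈ (0,1), Θ, θ⁰, μ ∈ ℝ and σ > 0. The worst-case conditional value-at-risk of the affine loss x ↦ Θx + θ⁰ over the mean–variance ambiguity set equals the optimal value of the second-order cone program: sSup { ⨅_{β ∈ ℝ} (β + (1-α)⁻¹ · ∫ max(Θx + θ⁰ - β, 0) dP(x)) : P is a Borel probability measure on ℝ with finite second moment, mean μ and variance σ² } = sInf { β + (1-α)⁻¹·(e + s) : (β, e, q, z, s) ∈ ℝ⁵, e ≥ 0, z > 0, e - θ⁰ + β + q - Θμ - z > 0, Real.sqrt (q² + Θ²σ² + (z - s)²) ≤ z + s }. -/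
open MeasureTheory

lemma integral_two_point (p q a b : ℝ) (hp : 0 ≤ p) (hq : 0 ≤ q) (f : ℝ → ℝ) :
    ∫ x, f x ∂(ENNReal.ofReal p • Measure.dirac a + ENNReal.ofReal q • Measure.dirac b)
      = p * f a + q * f b := by
  have ia : Integrable f (Measure.dirac a) :=
    (integrable_const (f a)).congr (ae_eq_dirac f).symm
  have ib : Integrable f (Measure.dirac b) :=
    (integrable_const (f b)).congr (ae_eq_dirac f).symm
  rw [integral_add_measure (ia.smul_measure ENNReal.ofReal_ne_top)
      (ib.smul_measure ENNReal.ofReal_ne_top),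
    integral_smul_measure, integral_smul_measure, integral_dirac, integral_dirac,
    ENNReal.toReal_ofReal hp, ENNReal.toReal_ofReal hq, smul_eq_mul, smul_eq_mul]

lemma max_le_quad (y lam : ℝ) (hlam : 0 < lam) : max y 0 ≤ (y + lam)^2 / (4*lam) := by
  apply max_le
  · rw [le_div_iff₀ (by positivity)]; nlinarith [sq_nonneg (y - lam)]
  · positivity

lemma socp_key (q z s t w : ℝ) (hz : 0 < z) (hs : 0 ≤ s) (hw : 0 < w)
    (h4 : q^2 + t^2 ≤ 4*z*s) : q + t*w ≤ z + (1+w^2)*s := by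
  have h1 : (q + t*w)^2 ≤ (1+w^2)*(q^2+t^2) := by nlinarith [sq_nonneg (w*q - t)]
  have h2 : 4*((1+w^2)*(z*s)) ≤ (z + (1+w^2)*s)^2 := by nlinarith [sq_nonneg (z - (1+w^2)*s)]
  have hB : (0:ℝ) ≤ z + (1+w^2)*s := by positivity
  nlinarith [h1, h2, hB, sq_nonneg w]

lemma alg_sqrt (t w : ℝ) (hw : 0 < w) :
    (t/w)^2 + t^2 + ((1+w^2)*(t/(2*w)) - t/(2*w))^2 = ((1+w^2)*(t/(2*w)) + t/(2*w))^2 := by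
  have hw' : w ≠ 0 := ne_of_gt hw
  field_simp
  ring

lemma alg_obj (m t w ε : ℝ) (hw : 0 < w) :
    (m + (1+w^2)*(t/(2*w)) - t/w + ε) + (1+w^2)*(0 + t/(2*w)) = (m + w*t) + ε := by
  have hw' : w ≠ 0 := ne_of_gt hw
  field_simp
  ring

lemma alg_quadbound (t w : ℝ) (ht : t ≠ 0) (hw : w ≠ 0) :
    (t^2 + (t/w)^2)/(4*((1+w^2)*t/(2*w))) = t/(2*w) := by
  field_simp
  ring

lemma alg_mean (μ σ r w α : ℝ) (hw : w ≠ 0) (h : (1-α)*w^2 = α) :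
    (1-α)*(μ + r*σ*w) + α*(μ - r*σ/w) = μ := by
  field_simp
  linear_combination (r*σ) * h

lemma alg_var (μ σ r w α : ℝ) (hw : w ≠ 0) (h : (1-α)*w^2 = α) (hr2 : r^2 = 1) :
    (1-α)*((μ + r*σ*w) - μ)^2 + α*((μ - r*σ/w) - μ)^2 = σ^2 := by
  field_simp
  linear_combination (σ^2*(w^2-1)) * h + ((1-α)*σ^2*w^4 + α*σ^2) * hr2

set_option maxHeartbeats 1000000 in
theorem worst_case_cvar_eq_socp
    (α Θ θ0 μ σ : ℝ) (hα : α ∈ Set.Ioo (0 : ℝ) 1) (hσ : 0 < σ) :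
    sSup { v : ℝ | ∃ P : Measure ℝ, IsProbabilityMeasure P ∧
        MemLp id 2 P ∧ (∫ x, x ∂P) = μ ∧ (∫ x, (x - μ) ^ 2 ∂P) = σ ^ 2 ∧
        v = ⨅ β : ℝ, (β + (1 - α)⁻¹ * ∫ x, max (Θ * x + θ0 - β) 0 ∂P) } =
    sInf { v : ℝ | ∃ β e q z s : ℝ, 0 ≤ e ∧ 0 < z ∧
        0 < e - θ0 + β + q - Θ * μ - z ∧
        Real.sqrt (q ^ 2 + Θ ^ 2 * σ ^ 2 + (z - s) ^ 2) ≤ z + s ∧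
        v = β + (1 - α)⁻¹ * (e + s) } := by
  obtain ⟨hα0, hα1⟩ := hα
  have h1α : 0 < 1 - α := by linarith
  set c := (1 - α)⁻¹ with hcdef
  have hc0 : 0 < c := by positivity
  have hc1 : 1 < c := (one_lt_inv₀ h1α).2 (by linarith)
  set w := Real.sqrt (α / (1 - α)) with hwdef
  have hw : 0 < w := Real.sqrt_pos.2 (by positivity)
  have hw2 : w ^ 2 = α / (1 - α) := Real.sq_sqrt (by positivity)
  have hcw : c = 1 + w ^ 2 := by rw [hw2, hcdef]; field_simp; ring
  set t := |Θ| * σ with htdef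
  have ht : 0 ≤ t := by positivity
  have ht2 : t ^ 2 = Θ ^ 2 * σ ^ 2 := by rw [htdef, mul_pow, sq_abs]
  set m := Θ * μ + θ0 with hmdef
  set V := m + w * t with hVdef
  -- upper bound for every feasible P
  have key_ub : ∀ (P : Measure ℝ), IsProbabilityMeasure P → MemLp id 2 P →
      (∫ x, x ∂P) = μ → (∫ x, (x - μ) ^ 2 ∂P) = σ ^ 2 →
      (⨅ β : ℝ, (β + c * ∫ x, max (Θ * x + θ0 - β) 0 ∂P)) ≤ V := by
    intro P hP hL2 hmean hvar
    haveI := hP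
    have hxint : Integrable (fun x : ℝ => x) P := hL2.integrable one_le_two
    have hx2int : Integrable (fun x : ℝ => x ^ 2) P := hL2.integrable_sq
    have hmom2 : ∫ x, x ^ 2 ∂P = σ ^ 2 + μ ^ 2 := by
      have hvar' : ∫ x, (x ^ 2 - 2 * μ * x + μ ^ 2) ∂P = σ ^ 2 := by
        rw [← hvar]; congr 1; funext x; ring
      have i1 : Integrable (fun x : ℝ => x ^ 2 - 2 * μ * x) P :=
        hx2int.sub (hxint.const_mul (2 * μ))
      have i2 : Integrable (fun x : ℝ => 2 * μ * x) P := hxint.const_mul (2 * μ)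
      rw [integral_add i1 (integrable_const _), integral_sub hx2int i2, integral_const_mul,
        hmean, integral_const, probReal_univ] at hvar'
      simp at hvar'
      linarith
    have quadint : ∀ C : ℝ, Integrable (fun x => (Θ * x + C) ^ 2) P := by
      intro C
      have h : (fun x : ℝ => (Θ * x + C) ^ 2)
          = fun x => Θ ^ 2 * x ^ 2 + (2 * Θ * C) * x + C ^ 2 := by
        funext x; ring
      rw [h]
      exact ((hx2int.const_mul _).add (hxint.const_mul _)).add (integrable_const _)
    have quadval : ∀ C : ℝ, ∫ x, (Θ * x + C) ^ 2 ∂P = Θ ^ 2 * σ ^ 2 + (Θ * μ + C) ^ 2 := by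
      intro C
      have h : (fun x : ℝ => (Θ * x + C) ^ 2)
          = fun x => Θ ^ 2 * x ^ 2 + (2 * Θ * C) * x + C ^ 2 := by
        funext x; ring
      have i1 : Integrable (fun x : ℝ => Θ ^ 2 * x ^ 2 + 2 * Θ * C * x) P :=
        (hx2int.const_mul _).add (hxint.const_mul _)
      have i2 : Integrable (fun x : ℝ => Θ ^ 2 * x ^ 2) P := hx2int.const_mul _
      have i3 : Integrable (fun x : ℝ => 2 * Θ * C * x) P := hxint.const_mul _
      rw [h, integral_add i1 (integrable_const _), integral_add i2 i3, integral_const_mul,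
        integral_const_mul, hmom2, hmean, integral_const, probReal_univ]
      simp
      ring
    have hmax_meas : ∀ β : ℝ, AEStronglyMeasurable (fun x => max (Θ * x + θ0 - β) 0) P := by
      intro β
      exact (Continuous.max (by continuity) continuous_const).aestronglyMeasurable
    have hmaxint : ∀ β : ℝ, Integrable (fun x => max (Θ * x + θ0 - β) 0) P := by
      intro β
      refine ((quadint (θ0 - β + 1)).div_const (4 * 1)).mono' (hmax_meas β)
        (ae_of_all _ fun x => ?_)
      rw [Real.norm_eq_abs, abs_of_nonneg (le_max_right _ _)]
      have h := max_le_quad (Θ * x + θ0 - β) 1 one_pos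
      calc max (Θ * x + θ0 - β) 0 ≤ (Θ * x + θ0 - β + 1) ^ 2 / (4 * 1) := h
        _ = (Θ * x + (θ0 - β + 1)) ^ 2 / (4 * 1) := by ring_nf
    have hlinint : ∀ β : ℝ, Integrable (fun x => Θ * x + θ0 - β) P := by
      intro β
      exact ((hxint.const_mul Θ).add (integrable_const θ0)).sub (integrable_const β)
    have hlinval : ∀ β : ℝ, ∫ x, (Θ * x + θ0 - β) ∂P = m - β := by
      intro β
      have i1 : Integrable (fun x : ℝ => Θ * x + θ0) P :=
        (hxint.const_mul Θ).add (integrable_const θ0)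
      have i2 : Integrable (fun x : ℝ => Θ * x) P := hxint.const_mul Θ
      rw [integral_sub i1 (integrable_const β), integral_add i2 (integrable_const θ0),
        integral_const_mul, hmean, integral_const, integral_const, probReal_univ]
      simp [hmdef]
    have hbdd : BddBelow (Set.range fun β : ℝ =>
        β + c * ∫ x, max (Θ * x + θ0 - β) 0 ∂P) := by
      refine ⟨m, ?_⟩
      rintro x ⟨β, rfl⟩
      show m ≤ β + c * ∫ x, max (Θ * x + θ0 - β) 0 ∂P
      have h0 : 0 ≤ ∫ x, max (Θ * x + θ0 - β) 0 ∂P :=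
        integral_nonneg fun x => le_max_right _ _
      rcases le_total m β with h | h
      · have := mul_nonneg hc0.le h0
        linarith
      · have h1 : m - β ≤ ∫ x, max (Θ * x + θ0 - β) 0 ∂P := by
          rw [← hlinval β]
          exact integral_mono (hlinint β) (hmaxint β) fun x => le_max_left _ _
        have h2 : c * (m - β) ≤ c * ∫ x, max (Θ * x + θ0 - β) 0 ∂P :=
          mul_le_mul_of_nonneg_left h1 hc0.le
        nlinarith [h2, hc1, h]
    rcases eq_or_ne Θ 0 with hΘ | hΘ
    · refine le_trans (ciInf_le hbdd θ0) ?_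
      have h : (fun x : ℝ => max (Θ * x + θ0 - θ0) 0) = fun _ => (0:ℝ) := by
        funext x
        simp [hΘ]
      rw [h, integral_zero]
      have hV : m ≤ V := by
        rw [hVdef]
        nlinarith [mul_nonneg hw.le ht]
      have hm : m = θ0 := by rw [hmdef, hΘ]; ring
      rw [mul_zero, add_zero]
      linarith
    · have ht0 : 0 < t := mul_pos (abs_pos.2 hΘ) hσ
      set lam := c * t / (2 * w) with hlamdef
      have hlam : 0 < lam := by positivity
      set B := m + (c - 2) * t / (2 * w) with hBdef
      have hIle : ∫ x, max (Θ * x + θ0 - B) 0 ∂P ≤ t / (2 * w) := by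
        have hmono : ∫ x, max (Θ * x + θ0 - B) 0 ∂P
            ≤ ∫ x, (Θ * x + (θ0 - B + lam)) ^ 2 / (4 * lam) ∂P := by
          refine integral_mono_of_nonneg (ae_of_all _ fun x => le_max_right _ _)
            ((quadint (θ0 - B + lam)).div_const (4 * lam)) (ae_of_all _ fun x => ?_)
          have h := max_le_quad (Θ * x + θ0 - B) lam hlam
          calc max (Θ * x + θ0 - B) 0 ≤ (Θ * x + θ0 - B + lam) ^ 2 / (4 * lam) := h
            _ = (Θ * x + (θ0 - B + lam)) ^ 2 / (4 * lam) := by ring_nf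
        refine le_trans hmono ?_
        rw [integral_div, quadval]
        have hu : Θ * μ + (θ0 - B + lam) = t / w := by
          rw [hBdef, hlamdef, hmdef]
          field_simp
          ring
        rw [hu, ← ht2, hlamdef, hcw]
        exact le_of_eq (alg_quadbound t w (ne_of_gt ht0) (ne_of_gt hw))
      refine le_trans (ciInf_le hbdd B) ?_
      have h2 : c * ∫ x, max (Θ * x + θ0 - B) 0 ∂P ≤ c * (t / (2 * w)) :=
        mul_le_mul_of_nonneg_left hIle hc0.le
      have h3 : B + c * (t / (2 * w)) = V := by
        rw [hBdef, hVdef, hcw]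
        have hw' : w ≠ 0 := ne_of_gt hw
        field_simp
        ring
      show B + c * ∫ x, max (Θ * x + θ0 - B) 0 ∂P ≤ V
      exact le_trans (add_le_add (le_refl B) h2) (le_of_eq h3)
  -- V is attained
  have key_mem : V ∈ { v : ℝ | ∃ P : Measure ℝ, IsProbabilityMeasure P ∧
        MemLp id 2 P ∧ (∫ x, x ∂P) = μ ∧ (∫ x, (x - μ) ^ 2 ∂P) = σ ^ 2 ∧
        v = ⨅ β : ℝ, (β + c * ∫ x, max (Θ * x + θ0 - β) 0 ∂P) } := by
    have hw' : w ≠ 0 := ne_of_gt hw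
    set r : ℝ := if Θ < 0 then -1 else 1 with hrdef
    have hr : Θ * r = |Θ| := by
      rw [hrdef]; split_ifs with h
      · rw [abs_of_neg h]; ring
      · rw [abs_of_nonneg (not_lt.1 h)]; ring
    have hr2 : r ^ 2 = 1 := by
      rw [hrdef]; split_ifs <;> norm_num
    set a := μ + r * σ * w with hadef
    set b := μ - r * σ / w with hbdef
    set P₀ := ENNReal.ofReal (1 - α) • Measure.dirac a + ENNReal.ofReal α • Measure.dirac b
      with hP₀def
    have htp : ∀ f : ℝ → ℝ, ∫ x, f x ∂P₀ = (1 - α) * f a + α * f b := by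
      intro f
      rw [hP₀def]
      exact integral_two_point (1-α) α a b h1α.le hα0.le f
    have hprob : IsProbabilityMeasure P₀ := by
      constructor
      rw [hP₀def, Measure.add_apply, Measure.smul_apply, Measure.smul_apply,
        Measure.dirac_apply_of_mem (Set.mem_univ a), Measure.dirac_apply_of_mem (Set.mem_univ b),
        smul_eq_mul, mul_one, smul_eq_mul, mul_one, ← ENNReal.ofReal_add (by linarith) hα0.le]
      norm_num
    have hmem2 : MemLp id 2 P₀ := by
      rw [memLp_two_iff_integrable_sq aestronglyMeasurable_id]
      have ia : Integrable (fun x : ℝ => x ^ 2) (Measure.dirac a) :=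
        (integrable_const (a ^ 2)).congr (ae_eq_dirac (fun x : ℝ => x ^ 2)).symm
      have ib : Integrable (fun x : ℝ => x ^ 2) (Measure.dirac b) :=
        (integrable_const (b ^ 2)).congr (ae_eq_dirac (fun x : ℝ => x ^ 2)).symm
      rw [hP₀def]
      exact (ia.smul_measure ENNReal.ofReal_ne_top).add_measure
        (ib.smul_measure ENNReal.ofReal_ne_top)
    have hw2' : (1 - α) * w ^ 2 = α := by
      rw [hw2]; field_simp
    have hmean₀ : ∫ x, x ∂P₀ = μ := by
      rw [htp (fun x => x), hadef, hbdef]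
      exact alg_mean μ σ r w α hw' hw2'
    have hvar₀ : ∫ x, (x - μ) ^ 2 ∂P₀ = σ ^ 2 := by
      rw [htp (fun x => (x - μ) ^ 2), hadef, hbdef]
      exact alg_var μ σ r w α hw' hw2' hr2
    have hVa : Θ * a + θ0 = V := by
      rw [hadef, hVdef, hmdef, htdef]
      linear_combination (σ * w) * hr
    have hVb : Θ * b + θ0 ≤ V := by
      have hb1 : Θ * b + θ0 = m - t / w := by
        rw [hbdef, hmdef, htdef, ← hr]
        field_simp
        ring
      rw [hb1, hVdef]
      have h1 : 0 ≤ t / w := by positivity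
      nlinarith [mul_nonneg hw.le ht]
    have hc1α : c * (1 - α) = 1 := inv_mul_cancel₀ (ne_of_gt h1α)
    have hfeq : ∀ β : ℝ, (β + c * ∫ x, max (Θ * x + θ0 - β) 0 ∂P₀)
        = β + c * ((1 - α) * max (V - β) 0 + α * max (Θ * b + θ0 - β) 0) := by
      intro β
      rw [htp (fun x => max (Θ * x + θ0 - β) 0), hVa]
    have hlb : ∀ β : ℝ, V ≤ β + c * ∫ x, max (Θ * x + θ0 - β) 0 ∂P₀ := by
      intro β
      rw [hfeq β]
      have h1 : V - β ≤ max (V - β) 0 := le_max_left _ _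
      have h2 : (0:ℝ) ≤ max (Θ * b + θ0 - β) 0 := le_max_right _ _
      have e : c * ((1 - α) * max (V - β) 0 + α * max (Θ * b + θ0 - β) 0)
          = max (V - β) 0 + c * α * max (Θ * b + θ0 - β) 0 := by
        linear_combination (max (V - β) 0) * hc1α
      rw [e]
      have h3 : 0 ≤ c * α * max (Θ * b + θ0 - β) 0 :=
        mul_nonneg (mul_nonneg hc0.le hα0.le) h2
      linarith
    have hiInf : (⨅ β : ℝ, (β + c * ∫ x, max (Θ * x + θ0 - β) 0 ∂P₀)) = V := by
      refine le_antisymm ?_ (le_ciInf hlb)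
      have hrange : BddBelow (Set.range fun β : ℝ =>
          β + c * ∫ x, max (Θ * x + θ0 - β) 0 ∂P₀) := by
        refine ⟨V, ?_⟩
        rintro x ⟨β, rfl⟩
        exact hlb β
      refine le_trans (ciInf_le hrange V) ?_
      rw [hfeq V]
      have h1 : max (V - V) 0 = 0 := by simp
      have h2 : max (Θ * b + θ0 - V) 0 = 0 := max_eq_right (by linarith)
      rw [h1, h2]
      simp
    exact ⟨P₀, hprob, hmem2, hmean₀, hvar₀, hiInf.symm⟩
  -- lower bound for the SOCP
  have key_lb : ∀ v ∈ { v : ℝ | ∃ β e q z s : ℝ, 0 ≤ e ∧ 0 < z ∧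
        0 < e - θ0 + β + q - Θ * μ - z ∧
        Real.sqrt (q ^ 2 + Θ ^ 2 * σ ^ 2 + (z - s) ^ 2) ≤ z + s ∧
        v = β + c * (e + s) }, V ≤ v := by
    rintro v ⟨β, e, q, z, s, he, hz, hcon, hsqrt, hveq⟩
    have hnn : (0:ℝ) ≤ q ^ 2 + Θ ^ 2 * σ ^ 2 + (z - s) ^ 2 := by positivity
    have hzs : (0:ℝ) ≤ z + s := le_trans (Real.sqrt_nonneg _) hsqrt
    have hsq : q ^ 2 + Θ ^ 2 * σ ^ 2 + (z - s) ^ 2 ≤ (z + s) ^ 2 := by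
      nlinarith [Real.sq_sqrt hnn, Real.sqrt_nonneg (q ^ 2 + Θ ^ 2 * σ ^ 2 + (z - s) ^ 2), hsqrt]
    have h4 : q ^ 2 + t ^ 2 ≤ 4 * z * s := by rw [ht2]; nlinarith [hsq]
    have hs : 0 ≤ s := by nlinarith [sq_nonneg q, sq_nonneg t]
    have key : q + t * w ≤ z + c * s := by
      rw [hcw]; exact socp_key q z s t w hz hs hw h4
    have hee : e ≤ c * e := le_mul_of_one_le_left he hc1.le
    have hveq' : v = β + c * e + c * s := by rw [hveq]; ring
    rw [hVdef]
    linarith [key, hcon, hee]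
  -- the SOCP infimum is at most V
  have key_inf_le : ∀ ε : ℝ, 0 < ε → ∃ v ∈ { v : ℝ | ∃ β e q z s : ℝ, 0 ≤ e ∧ 0 < z ∧
        0 < e - θ0 + β + q - Θ * μ - z ∧
        Real.sqrt (q ^ 2 + Θ ^ 2 * σ ^ 2 + (z - s) ^ 2) ≤ z + s ∧
        v = β + c * (e + s) }, v ≤ V + ε := by
    intro ε hε
    rcases eq_or_ne Θ 0 with hΘ | hΘ
    · -- degenerate case
      set z0 := (1 - α) * ε with hz0def
      have hz0 : 0 < z0 := mul_pos h1α hε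
      refine ⟨θ0 + c * (0 + z0), ⟨θ0, 0, 2 * z0, z0, z0, le_refl 0, hz0, ?_, ?_, rfl⟩, ?_⟩
      · rw [hΘ]; ring_nf; linarith
      · have h : (2 * z0) ^ 2 + Θ ^ 2 * σ ^ 2 + (z0 - z0) ^ 2 = (2 * z0) ^ 2 := by
          rw [hΘ]; ring
        rw [h, Real.sqrt_sq (by positivity)]; linarith
      · have hcz : c * (0 + z0) = ε := by
          rw [hz0def, hcdef]; field_simp; ring
        have hVθ : V = θ0 := by
          rw [hVdef, hmdef, htdef, hΘ]; simp
        rw [hcz, hVθ]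
    · have ht0 : 0 < t := mul_pos (abs_pos.2 hΘ) hσ
      set s0 := t / (2 * w) with hs0def
      have hs0 : 0 < s0 := by positivity
      set z1 := c * s0 with hz1def
      have hz1 : 0 < z1 := mul_pos hc0 hs0
      set q1 := t / w with hq1def
      set β1 := m + z1 - q1 + ε with hβ1def
      refine ⟨β1 + c * (0 + s0), ⟨β1, 0, q1, z1, s0, le_refl 0, hz1, ?_, ?_, rfl⟩, ?_⟩
      · rw [hβ1def, hmdef]; ring_nf; linarith
      · have h : q1 ^ 2 + Θ ^ 2 * σ ^ 2 + (z1 - s0) ^ 2 = (z1 + s0) ^ 2 := by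
          rw [← ht2, hq1def, hz1def, hs0def, hcw]
          exact alg_sqrt t w hw
        rw [h, Real.sqrt_sq (by positivity)]
      · have h : β1 + c * (0 + s0) = V + ε := by
          rw [hβ1def, hz1def, hq1def, hs0def, hVdef, hcw]
          exact alg_obj m t w ε hw
        rw [h]
  -- assemble
  have hSne : { v : ℝ | ∃ P : Measure ℝ, IsProbabilityMeasure P ∧
        MemLp id 2 P ∧ (∫ x, x ∂P) = μ ∧ (∫ x, (x - μ) ^ 2 ∂P) = σ ^ 2 ∧
        v = ⨅ β : ℝ, (β + c * ∫ x, max (Θ * x + θ0 - β) 0 ∂P) }.Nonempty := ⟨V, key_mem⟩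
  have hSub : ∀ v ∈ { v : ℝ | ∃ P : Measure ℝ, IsProbabilityMeasure P ∧
        MemLp id 2 P ∧ (∫ x, x ∂P) = μ ∧ (∫ x, (x - μ) ^ 2 ∂P) = σ ^ 2 ∧
        v = ⨅ β : ℝ, (β + c * ∫ x, max (Θ * x + θ0 - β) 0 ∂P) }, v ≤ V := by
    rintro v ⟨P, h1, h2, h3, h4, h5⟩
    rw [h5]; exact key_ub P h1 h2 h3 h4
  have hTbdd : BddBelow { v : ℝ | ∃ β e q z s : ℝ, 0 ≤ e ∧ 0 < z ∧
        0 < e - θ0 + β + q - Θ * μ - z ∧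
        Real.sqrt (q ^ 2 + Θ ^ 2 * σ ^ 2 + (z - s) ^ 2) ≤ z + s ∧
        v = β + c * (e + s) } := ⟨V, key_lb⟩
  obtain ⟨v1, hv1mem, _⟩ := key_inf_le 1 one_pos
  have h1 : sSup { v : ℝ | ∃ P : Measure ℝ, IsProbabilityMeasure P ∧
        MemLp id 2 P ∧ (∫ x, x ∂P) = μ ∧ (∫ x, (x - μ) ^ 2 ∂P) = σ ^ 2 ∧
        v = ⨅ β : ℝ, (β + c * ∫ x, max (Θ * x + θ0 - β) 0 ∂P) } = V :=
    le_antisymm (csSup_le hSne hSub) (le_csSup ⟨V, hSub⟩ key_mem)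
  have h2 : sInf { v : ℝ | ∃ β e q z s : ℝ, 0 ≤ e ∧ 0 < z ∧
        0 < e - θ0 + β + q - Θ * μ - z ∧
        Real.sqrt (q ^ 2 + Θ ^ 2 * σ ^ 2 + (z - s) ^ 2) ≤ z + s ∧
        v = β + c * (e + s) } = V := by
    refine le_antisymm (le_of_forall_pos_le_add ?_) (le_csInf ⟨v1, hv1mem⟩ key_lb)
    intro ε hε
    obtain ⟨v, hvmem, hvle⟩ := key_inf_le ε hε
    exact le_trans (csInf_le hTbdd hvmem) hvle
  rw [h1, h2]
end

section
/- Let α ∈ (0,1), Θ, θ⁰, μ ∈ ℝ and σ > 0. Then sSup { ⨅_{β ∈ ℝ} (β + (1-α)⁻¹ · ∫ max(Θx + θ⁰ - β, 0) dP(x)) : P is a Borel probability measure on ℝ with finite second moment, mean μ and variance σ² } = Θμ + θ⁰ + |Θ|·σ·Real.sqrt (α/(1-α)). -/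
open MeasureTheory

lemma my_integrable_dirac {f : ℝ → ℝ} (hf : Measurable f) (a : ℝ) :
    Integrable f (Measure.dirac a) := by
  refine ⟨hf.aestronglyMeasurable, ?_⟩
  rw [HasFiniteIntegral, lintegral_dirac]
  exact ENNReal.coe_lt_top

lemma integrable_two_point {f : ℝ → ℝ} (hf : Measurable f) (w1 w2 a b : ℝ) :
    Integrable f (ENNReal.ofReal w1 • Measure.dirac a + ENNReal.ofReal w2 • Measure.dirac b) := by
  refine Integrable.add_measure ?_ ?_ <;>
    exact (my_integrable_dirac hf _).smul_measure ENNReal.ofReal_ne_top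

lemma integral_two_point_s1 {f : ℝ → ℝ} (hf : Measurable f) {w1 w2 : ℝ} (a b : ℝ)
    (hw1 : 0 ≤ w1) (hw2 : 0 ≤ w2) :
    ∫ x, f x ∂(ENNReal.ofReal w1 • Measure.dirac a + ENNReal.ofReal w2 • Measure.dirac b)
      = w1 * f a + w2 * f b := by
  rw [integral_add_measure ((my_integrable_dirac hf _).smul_measure ENNReal.ofReal_ne_top)
    ((my_integrable_dirac hf _).smul_measure ENNReal.ofReal_ne_top),
    integral_smul_measure, integral_smul_measure, integral_dirac, integral_dirac,
    ENNReal.toReal_ofReal hw1, ENNReal.toReal_ofReal hw2, smul_eq_mul, smul_eq_mul]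

-- integral facts under a general P in the ambiguity set
lemma key_integral (Θ θ0 μ σ k : ℝ) (P : Measure ℝ) [IsProbabilityMeasure P]
    (h2 : MemLp id 2 P) (hmean : (∫ x, x ∂P) = μ) (hvar : (∫ x, (x - μ) ^ 2 ∂P) = σ ^ 2) :
    (∫ x, (Θ * x + θ0 - (Θ * μ + θ0 + k)) ^ 2 ∂P) = Θ ^ 2 * σ ^ 2 + k ^ 2 := by
  have i1 : Integrable (fun x => (x - μ) ^ 2) P := by
    have : MemLp (fun x : ℝ => x - μ) 2 P := h2.sub (memLp_const μ)
    exact this.integrable_sq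
  have iid : Integrable (fun x : ℝ => x) P := h2.integrable one_le_two
  have i2 : Integrable (fun x : ℝ => x - μ) P := iid.sub (integrable_const μ)
  have hpt : ∀ x : ℝ, (Θ * x + θ0 - (Θ * μ + θ0 + k)) ^ 2
      = Θ ^ 2 * (x - μ) ^ 2 + (2 * Θ * (-k)) * (x - μ) + k ^ 2 := by
    intro x; ring
  have hzero : (∫ x, (x - μ) ∂P) = 0 := by
    rw [integral_sub iid (integrable_const μ), hmean]; simp
  calc (∫ x, (Θ * x + θ0 - (Θ * μ + θ0 + k)) ^ 2 ∂P)
      = ∫ x, (Θ ^ 2 * (x - μ) ^ 2 + (2 * Θ * (-k)) * (x - μ) + k ^ 2) ∂P := by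
        apply integral_congr_ae; filter_upwards with x using hpt x
    _ = Θ ^ 2 * σ ^ 2 + k ^ 2 := by
        have ia : Integrable (fun x => Θ ^ 2 * (x - μ) ^ 2 + (2 * Θ * (-k)) * (x - μ)) P := by
          exact (i1.const_mul _).add (i2.const_mul _)
        have ib : Integrable (fun x => Θ ^ 2 * (x - μ) ^ 2) P := i1.const_mul _
        have ic : Integrable (fun x => (2 * Θ * (-k)) * (x - μ)) P := i2.const_mul _
        rw [integral_add ia (integrable_const _), integral_add ib ic,
          integral_const_mul, integral_const_mul, hvar, hzero, integral_const]
        simp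

section
variable (α Θ θ0 μ σ : ℝ) (P : Measure ℝ) [IsProbabilityMeasure P]

lemma iL (h2 : MemLp id 2 P) : Integrable (fun x => Θ * x + θ0) P := by
  have iid : Integrable (fun x : ℝ => x) P := h2.integrable one_le_two
  exact (iid.const_mul Θ).add (integrable_const θ0)

lemma iMax (h2 : MemLp id 2 P) (β : ℝ) :
    Integrable (fun x => max (Θ * x + θ0 - β) 0) P := by
  have h := (iL Θ θ0 P h2).sub (integrable_const β)
  refine h.mono ?_ (Filter.Eventually.of_forall fun x => ?_)
  · exact ((((measurable_id.const_mul Θ).add_const θ0).sub_const β).max measurable_const).aestronglyMeasurable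
  · simp only [Real.norm_eq_abs]
    rcases le_or_gt (Θ * x + θ0 - β) 0 with h' | h'
    · rw [max_eq_right h', abs_zero]; exact abs_nonneg _
    · rw [max_eq_left h'.le]; simp [Pi.sub_apply]

-- lower bound: the RU objective is ≥ Θμ + θ0 for every β
lemma ru_lb (hα : α ∈ Set.Ioo (0:ℝ) 1) (h2 : MemLp id 2 P)
    (hmean : (∫ x, x ∂P) = μ) (β : ℝ) :
    Θ * μ + θ0 ≤ β + (1 - α)⁻¹ * ∫ x, max (Θ * x + θ0 - β) 0 ∂P := by
  obtain ⟨hα0, hα1⟩ := hα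
  have h1α : (0:ℝ) < 1 - α := by linarith
  have hc : (1:ℝ) ≤ (1 - α)⁻¹ := by rw [le_inv_comm₀] <;> linarith
  have hnn : 0 ≤ ∫ x, max (Θ * x + θ0 - β) 0 ∂P :=
    integral_nonneg fun x => le_max_right _ _
  have hmono : (∫ x, (Θ * x + θ0) ∂P) ≤ ∫ x, (β + max (Θ * x + θ0 - β) 0) ∂P := by
    refine integral_mono (iL Θ θ0 P h2) ((integrable_const β).add (iMax Θ θ0 P h2 β)) fun x => ?_
    have := le_max_left (Θ * x + θ0 - β) 0
    linarith
  have hL : (∫ x, (Θ * x + θ0) ∂P) = Θ * μ + θ0 := by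
    have iid : Integrable (fun x : ℝ => x) P := h2.integrable one_le_two
    rw [integral_add (iid.const_mul Θ) (integrable_const θ0), integral_const_mul, hmean,
      integral_const]
    simp
  have hR : (∫ x, (β + max (Θ * x + θ0 - β) 0) ∂P)
      = β + ∫ x, max (Θ * x + θ0 - β) 0 ∂P := by
    rw [integral_add (integrable_const β) (iMax Θ θ0 P h2 β), integral_const]
    simp
  rw [hL, hR] at hmono
  nlinarith

end

section
variable {α Θ θ0 μ σ : ℝ} {P : Measure ℝ} [IsProbabilityMeasure P]

lemma cvar_le (hα : α ∈ Set.Ioo (0:ℝ) 1) (hσ : 0 < σ)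
    (hP : IsProbabilityMeasure P)
    (h2 : MemLp id 2 P) (hmean : (∫ x, x ∂P) = μ) (hvar : (∫ x, (x - μ) ^ 2 ∂P) = σ ^ 2) :
    (⨅ β : ℝ, (β + (1 - α)⁻¹ * ∫ x, max (Θ * x + θ0 - β) 0 ∂P))
      ≤ Θ * μ + θ0 + |Θ| * σ * Real.sqrt (α / (1 - α)) := by
  obtain ⟨hα0, hα1⟩ := hα
  have h1α : (0:ℝ) < 1 - α := by linarith
  have hbdd : BddBelow (Set.range fun β : ℝ => β + (1-α)⁻¹ * ∫ x, max (Θ*x+θ0-β) 0 ∂P) := by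
    refine ⟨Θ*μ+θ0, ?_⟩
    rintro _ ⟨β, rfl⟩
    exact ru_lb α Θ θ0 μ P ⟨hα0, hα1⟩ h2 hmean β
  by_cases hΘ : Θ = 0
  · subst hΘ
    refine le_trans (ciInf_le hbdd θ0) ?_
    simp
  · set r := Real.sqrt (α / (1 - α)) with hr
    have hr0 : 0 < r := Real.sqrt_pos.2 (by positivity)
    have hr2 : r ^ 2 * (1 - α) = α := by
      rw [hr, Real.sq_sqrt (by positivity)]; field_simp
    set s := |Θ| * σ with hs
    have hs0 : 0 < s := mul_pos (abs_pos.2 hΘ) hσ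
    set t := s / (2 * r * (1 - α)) with htdef
    have ht0 : 0 < t := by positivity
    have ht' : t * (2 * r * (1 - α)) = s := by
      rw [htdef]; field_simp
    set k : ℝ := t * (2*α - 1) - t with hk
    set βs : ℝ := Θ * μ + θ0 + t * (2*α - 1) with hβs
    refine le_trans (ciInf_le hbdd βs) ?_
    have hI : (∫ x, (Θ * x + θ0 - (Θ * μ + θ0 + k)) ^ 2 ∂P) = Θ ^ 2 * σ ^ 2 + k ^ 2 :=
      key_integral Θ θ0 μ σ k P h2 hmean hvar
    have mm : MemLp (fun x : ℝ => Θ * x + θ0 - (Θ * μ + θ0 + k)) 2 P := by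
      have h' : MemLp (fun x : ℝ => Θ * x) 2 P := h2.const_mul Θ
      have := h'.add (memLp_const (θ0 - (Θ * μ + θ0 + k)))
      have heq : (fun x : ℝ => Θ * x + θ0 - (Θ * μ + θ0 + k))
          = fun x : ℝ => Θ * x + (θ0 - (Θ * μ + θ0 + k)) := by funext x; ring
      rw [heq]; exact this
    have i3 : Integrable (fun x => (Θ * x + θ0 - (Θ * μ + θ0 + k)) ^ 2) P := mm.integrable_sq
    have hmaxle : (∫ x, max (Θ * x + θ0 - βs) 0 ∂P)
        ≤ (4*t)⁻¹ * (Θ ^ 2 * σ ^ 2 + k ^ 2) := by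
      have step : (∫ x, max (Θ * x + θ0 - βs) 0 ∂P)
          ≤ ∫ x, (4*t)⁻¹ * (Θ * x + θ0 - (Θ * μ + θ0 + k)) ^ 2 ∂P := by
        refine integral_mono (iMax Θ θ0 P h2 βs) (i3.const_mul _) fun x => ?_
        have hy : Θ * x + θ0 - (Θ * μ + θ0 + k) = (Θ * x + θ0 - βs) + t := by
          rw [hβs, hk]; ring
        rw [hy]
        set y := Θ * x + θ0 - βs with hydef
        have h4t : (0:ℝ) < 4 * t := by linarith
        have hb : max y 0 * (4*t) ≤ (y + t)^2 := by
          rcases le_or_gt y 0 with h' | h'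
          · rw [max_eq_right h']; nlinarith [sq_nonneg (y + t)]
          · rw [max_eq_left h'.le]; nlinarith [sq_nonneg (y - t)]
        calc max y 0 = (4*t)⁻¹ * (max y 0 * (4*t)) := by field_simp
          _ ≤ (4*t)⁻¹ * (y + t)^2 := by
              exact mul_le_mul_of_nonneg_left hb (by positivity)
      rw [integral_const_mul, hI] at step
      exact step
    have hc0 : (0:ℝ) < (1 - α)⁻¹ := by positivity
    have hchain : βs + (1 - α)⁻¹ * ∫ x, max (Θ * x + θ0 - βs) 0 ∂P
        ≤ βs + (1 - α)⁻¹ * ((4*t)⁻¹ * (Θ ^ 2 * σ ^ 2 + k ^ 2)) := by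
      have := mul_le_mul_of_nonneg_left hmaxle hc0.le
      linarith
    refine le_trans hchain (le_of_eq ?_)
    have hΘσ : Θ ^ 2 * σ ^ 2 = s ^ 2 := by rw [hs]; rw [mul_pow, sq_abs]
    rw [hβs, hk, hΘσ]
    have hse : s = t * (2 * r * (1 - α)) := ht'.symm
    rw [hse]
    have h4 : (1-α)⁻¹ * ((4*t)⁻¹ * ((t*(2*r*(1-α)))^2 + (t*(2*α-1)-t)^2)) = t := by
      have e1 : (1-α)⁻¹ * ((4*t)⁻¹ * ((t*(2*r*(1-α)))^2 + (t*(2*α-1)-t)^2))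
          = ((1-α)⁻¹*(1-α)) * ((4*t)⁻¹*(4*t)) * (t*(r^2*(1-α) + (1-α))) := by ring
      rw [e1, inv_mul_cancel₀ h1α.ne', inv_mul_cancel₀ (by positivity), hr2]; ring
    have h5 : t*(2*r*(1-α))*r = 2*t*α := by linear_combination 2*t*hr2
    linear_combination h4 + h5 - 4*(abs Θ)*σ*(r*2 - r*α*2)⁻¹*hr2

end

lemma exists_attaining (α Θ θ0 μ σ : ℝ) (hα : α ∈ Set.Ioo (0 : ℝ) 1) (hσ : 0 < σ) :
    ∃ P : Measure ℝ, IsProbabilityMeasure P ∧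
        MemLp id 2 P ∧ (∫ x, x ∂P) = μ ∧ (∫ x, (x - μ) ^ 2 ∂P) = σ ^ 2 ∧
        Θ * μ + θ0 + |Θ| * σ * Real.sqrt (α / (1 - α))
          = ⨅ β : ℝ, (β + (1 - α)⁻¹ * ∫ x, max (Θ * x + θ0 - β) 0 ∂P) := by
  obtain ⟨hα0, hα1⟩ := hα
  have h1α : (0:ℝ) < 1 - α := by linarith
  set sa := Real.sqrt α with hsa
  set sb := Real.sqrt (1 - α) with hsb
  have hsa0 : 0 < sa := Real.sqrt_pos.2 hα0
  have hsb0 : 0 < sb := Real.sqrt_pos.2 h1α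
  have hsa2 : sa ^ 2 = α := Real.sq_sqrt hα0.le
  have hsb2 : sb ^ 2 = 1 - α := Real.sq_sqrt h1α.le
  have hrdiv : Real.sqrt (α / (1 - α)) = sa / sb := Real.sqrt_div hα0.le (1 - α)
  set ε : ℝ := if Θ < 0 then -1 else 1 with hε
  have hεΘ : ε * Θ = |Θ| := by
    rw [hε]; rcases lt_or_ge Θ 0 with h | h
    · rw [if_pos h, abs_of_neg h]; ring
    · rw [if_neg (not_lt.2 h), abs_of_nonneg h]; ring
  have hε2 : ε ^ 2 = 1 := by
    rw [hε]; rcases lt_or_ge Θ 0 with h | h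
    · rw [if_pos h]; norm_num
    · rw [if_neg (not_lt.2 h)]; norm_num
  set a : ℝ := μ + ε * σ * (sa / sb) with ha
  set b : ℝ := μ - ε * σ * (sb / sa) with hb
  set P : Measure ℝ :=
    ENNReal.ofReal (1 - α) • Measure.dirac a + ENNReal.ofReal α • Measure.dirac b with hP
  have hprob : IsProbabilityMeasure P := by
    constructor
    rw [hP, Measure.add_apply, Measure.smul_apply, Measure.smul_apply,
      Measure.dirac_apply_of_mem (Set.mem_univ a), Measure.dirac_apply_of_mem (Set.mem_univ b),
      smul_eq_mul, smul_eq_mul, mul_one, mul_one, ← ENNReal.ofReal_add (by linarith) hα0.le]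
    norm_num
  refine ⟨P, hprob, ?_, ?_, ?_, ?_⟩
  · rw [memLp_two_iff_integrable_sq aestronglyMeasurable_id]
    refine Integrable.add_measure ?_ ?_ <;>
      exact (my_integrable_dirac (measurable_id.pow_const 2) _).smul_measure ENNReal.ofReal_ne_top
  · rw [hP, integral_two_point_s1 (f := fun x : ℝ => x) measurable_id a b h1α.le hα0.le, ha, hb]
    field_simp
    linear_combination (ε * σ * sa * sa) * hsb2 - (ε * σ * sb * sb) * hsa2 + 2*ε*σ*(1-α)*hsa2 - 2*ε*σ*α*hsb2
  · rw [hP, integral_two_point_s1 (f := fun x : ℝ => (x - μ) ^ 2) (by fun_prop) a b h1α.le hα0.le,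
      ha, hb]
    have key : (1 - α) * (ε * σ * (sa / sb)) ^ 2 + α * (ε * σ * (sb / sa)) ^ 2 = σ ^ 2 := by
      rw [mul_pow, mul_pow, hε2, mul_pow, mul_pow, div_pow, div_pow, hsa2, hsb2]
      field_simp
      linear_combination (1 - α) * hε2
    linear_combination key
  · -- value computation
    have hmeas : ∀ β : ℝ, Measurable fun x => max (Θ * x + θ0 - β) 0 := by
      intro β; fun_prop
    have hg : ∀ β : ℝ, (∫ x, max (Θ * x + θ0 - β) 0 ∂P)
        = (1 - α) * max (Θ * a + θ0 - β) 0 + α * max (Θ * b + θ0 - β) 0 := fun β => by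
      rw [hP, integral_two_point_s1 (hmeas β) a b h1α.le hα0.le]
    set A : ℝ := Θ * a + θ0 with hA
    have hAval : A = Θ * μ + θ0 + |Θ| * σ * (sa / sb) := by
      rw [hA, ha]; rw [← hεΘ]; ring
    have hBA : Θ * b + θ0 ≤ A := by
      rw [hAval, hb]
      have h1 : 0 ≤ |Θ| * σ * (sa / sb) := by positivity
      have h2 : 0 ≤ |Θ| * σ * (sb / sa) := by positivity
      have : Θ * (μ - ε * σ * (sb / sa)) = Θ * μ - |Θ| * σ * (sb / sa) := by
        rw [← hεΘ]; ring
      rw [this]; linarith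
    have hlow : ∀ β : ℝ, A ≤ β + (1 - α)⁻¹ * ∫ x, max (Θ * x + θ0 - β) 0 ∂P := by
      intro β
      rw [hg β]
      have m1 : A - β ≤ max (Θ * a + θ0 - β) 0 := le_max_left _ _
      have m2 : (0:ℝ) ≤ max (Θ * b + θ0 - β) 0 := le_max_right _ _
      set M1 := max (Θ * a + θ0 - β) 0
      set M2 := max (Θ * b + θ0 - β) 0
      have e : (1 - α)⁻¹ * ((1 - α) * M1 + α * M2) = M1 + (1 - α)⁻¹ * (α * M2) := by
        field_simp
      rw [e]
      have : 0 ≤ (1 - α)⁻¹ * (α * M2) := by positivity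
      linarith
    have hup : A + (1 - α)⁻¹ * ∫ x, max (Θ * x + θ0 - A) 0 ∂P = A := by
      rw [hg A]
      rw [show Θ * a + θ0 - A = 0 by rw [hA]; ring, max_self,
        max_eq_right (by linarith : Θ * b + θ0 - A ≤ 0)]
      ring
    have hiInf : (⨅ β : ℝ, (β + (1 - α)⁻¹ * ∫ x, max (Θ * x + θ0 - β) 0 ∂P)) = A := by
      refine le_antisymm ?_ (le_ciInf hlow)
      refine le_trans (ciInf_le ⟨A, ?_⟩ A) (le_of_eq hup)
      rintro _ ⟨β, rfl⟩; exact hlow β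
    rw [hiInf, hAval, hrdiv]

theorem worst_case_cvar_closed_form
    (α Θ θ0 μ σ : ℝ) (hα : α ∈ Set.Ioo (0 : ℝ) 1) (hσ : 0 < σ) :
    sSup { v : ℝ | ∃ P : Measure ℝ, IsProbabilityMeasure P ∧
        MemLp id 2 P ∧ (∫ x, x ∂P) = μ ∧ (∫ x, (x - μ) ^ 2 ∂P) = σ ^ 2 ∧
        v = ⨅ β : ℝ, (β + (1 - α)⁻¹ * ∫ x, max (Θ * x + θ0 - β) 0 ∂P) } =
    Θ * μ + θ0 + |Θ| * σ * Real.sqrt (α / (1 - α)) := by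
  apply IsGreatest.csSup_eq
  constructor
  · obtain ⟨P, h1, h2, h3, h4, h5⟩ := exists_attaining α Θ θ0 μ σ hα hσ
    exact ⟨P, h1, h2, h3, h4, h5⟩
  · rintro v ⟨P, hP, h2, hmean, hvar, rfl⟩
    haveI := hP
    exact cvar_le hα hσ hP h2 hmean hvar
end

section
/- Let α ∈ (0,1), Θ, θ⁰, μ ∈ ℝ and σ > 0. Then sInf { β + (1-α)⁻¹·(e + s) : (β, e, q, z, s) ∈ ℝ⁵, e ≥ 0, z > 0, e - θ⁰ + β + q - Θμ - z > 0, Real.sqrt (q² + Θ²σ² + (z - s)²) ≤ z + s } = Θμ + θ⁰ + |Θ|·σ·Real.sqrt (α/(1-α)). -/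
theorem socp_optimal_value
    (α Θ θ0 μ σ : ℝ) (hα : α ∈ Set.Ioo (0 : ℝ) 1) (hσ : 0 < σ) :
    sInf { v : ℝ | ∃ β e q z s : ℝ, 0 ≤ e ∧ 0 < z ∧
        0 < e - θ0 + β + q - Θ * μ - z ∧
        Real.sqrt (q ^ 2 + Θ ^ 2 * σ ^ 2 + (z - s) ^ 2) ≤ z + s ∧
        v = β + (1 - α)⁻¹ * (e + s) } =
    Θ * μ + θ0 + |Θ| * σ * Real.sqrt (α / (1 - α)) := by
  obtain ⟨hα0, hα1⟩ := hα
  have h1a : (0:ℝ) < 1 - α := by linarith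
  set K := |Θ| * σ * Real.sqrt (α / (1 - α)) with hKdef
  set S := { v : ℝ | ∃ β e q z s : ℝ, 0 ≤ e ∧ 0 < z ∧
        0 < e - θ0 + β + q - Θ * μ - z ∧
        Real.sqrt (q ^ 2 + Θ ^ 2 * σ ^ 2 + (z - s) ^ 2) ≤ z + s ∧
        v = β + (1 - α)⁻¹ * (e + s) } with hS
  have hKnn : 0 ≤ K := by positivity
  have hK2 : K ^ 2 * (1 - α) = Θ ^ 2 * σ ^ 2 * α := by
    have hs : Real.sqrt (α / (1-α)) ^ 2 = α / (1-α) := Real.sq_sqrt (by positivity)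
    rw [hKdef, mul_pow, mul_pow, hs, sq_abs]
    field_simp
  -- lower bound
  have hlbd : ∀ v ∈ S, Θ * μ + θ0 + K ≤ v := by
    rintro v ⟨β, e, q, z, s, he, hz, h3, h4, rfl⟩
    have hzs : 0 ≤ z + s := le_trans (Real.sqrt_nonneg _) h4
    have hx : 0 ≤ q^2 + Θ^2*σ^2 + (z-s)^2 := by positivity
    have h4' : q^2 + Θ^2*σ^2 + (z-s)^2 ≤ (z+s)^2 := by
      calc q^2 + Θ^2*σ^2 + (z-s)^2 = Real.sqrt (q^2 + Θ^2*σ^2 + (z-s)^2) ^ 2 :=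
            (Real.sq_sqrt hx).symm
        _ ≤ (z+s)^2 := pow_le_pow_left₀ (Real.sqrt_nonneg _) h4 2
    set s' := (1-α)⁻¹ * s with hs'def
    have hss : s = (1-α) * s' := by
      rw [hs'def]; field_simp
    have hA' : q^2 + Θ^2*σ^2 ≤ 4*(z*((1-α)*s')) := by
      rw [← hss]; nlinarith [h4']
    have hmain : K ≤ z - q + s' := by
      nlinarith [sq_nonneg (q - 2*z*(1-α)), sq_nonneg (2*α*z - K),
        mul_pos (mul_pos hα0 hz) h1a, hA', hK2, hα0, h1a, hz]
    have ht1 : (1:ℝ) ≤ (1-α)⁻¹ := by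
      rw [le_inv_comm₀ one_pos h1a]; linarith
    have hexp : (1-α)⁻¹ * (e + s) = (1-α)⁻¹ * e + s' := by
      rw [hs'def]; ring
    have hee : 1 * e ≤ (1-α)⁻¹ * e := mul_le_mul_of_nonneg_right ht1 he
    rw [hexp]
    linarith
  have hbdd : BddBelow S := ⟨Θ * μ + θ0 + K, hlbd⟩
  have hne : S.Nonempty := by
    refine ⟨(θ0 + Θ*μ + 2) + (1-α)⁻¹ * (0 + Θ^2*σ^2/4),
      θ0 + Θ*μ + 2, 0, 0, 1, Θ^2*σ^2/4, le_rfl, one_pos, by linarith, ?_, rfl⟩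
    rw [show (0:ℝ)^2 + Θ^2*σ^2 + (1 - Θ^2*σ^2/4)^2 = (1 + Θ^2*σ^2/4)^2 by ring]
    exact le_of_eq (Real.sqrt_sq (by positivity))
  apply le_antisymm
  · -- sInf S ≤ L
    apply le_of_forall_pos_le_add
    intro ε hε
    rcases eq_or_ne Θ 0 with hT | hT
    · -- Θ = 0
      have hmem : (θ0 + Θ*μ + ε/4 + ε/4) + (1-α)⁻¹ * (0 + 0) ∈ S := by
        refine ⟨θ0 + Θ*μ + ε/4 + ε/4, 0, 0, ε/4, 0, le_rfl, by positivity, by linarith, ?_, rfl⟩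
        rw [hT]
        rw [show (0:ℝ)^2 + 0^2*σ^2 + (ε/4 - 0)^2 = (ε/4 + 0)^2 by ring]
        exact le_of_eq (Real.sqrt_sq (by positivity))
      have := csInf_le hbdd hmem
      have hK0 : K = 0 := by rw [hKdef, hT]; simp
      calc sInf S ≤ (θ0 + Θ*μ + ε/4 + ε/4) + (1-α)⁻¹ * (0 + 0) := this
        _ ≤ Θ * μ + θ0 + K + ε := by rw [hK0]; nlinarith
    · -- Θ ≠ 0
      have habs : 0 < |Θ| := abs_pos.mpr hT
      have hsq : 0 < Real.sqrt (α / (1-α)) := Real.sqrt_pos.mpr (by positivity)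
      have hKpos : 0 < K := by rw [hKdef]; positivity
      obtain ⟨z0, hz0, hz0K⟩ : ∃ z0, 0 < z0 ∧ K = 2*α*z0 :=
        ⟨K/(2*α), by positivity, by field_simp⟩
      set q0 := 2*z0*(1-α) with hq0def
      obtain ⟨s0, hs0, h4s⟩ : ∃ s0, 0 ≤ s0 ∧ 4*z0*s0 = q0^2 + Θ^2*σ^2 :=
        ⟨(q0^2+Θ^2*σ^2)/(4*z0), by positivity, by field_simp⟩
      have hTs' : Θ^2*σ^2*α = K^2*(1-α) := by linarith [hK2]
      have hinv : (1-α) * (1-α)⁻¹ = 1 := mul_inv_cancel₀ h1a.ne'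
      have hmul : (z0 - q0 + (1-α)⁻¹ * s0) * (4*z0*α*(1-α)) = K * (4*z0*α*(1-α)) := by
        linear_combination (4*z0*α*s0) * hinv + α * h4s + hTs' +
          (α*(q0 - 2*z0*(1-α))) * hq0def + ((1-α)*(K - 2*α*z0)) * hz0K
      have heq : z0 - q0 + (1-α)⁻¹ * s0 = K :=
        mul_right_cancel₀ (by positivity : (4*z0*α*(1-α)) ≠ 0) hmul
      have hmem : (θ0 - q0 + Θ*μ + z0 + ε/2) + (1-α)⁻¹ * (0 + s0) ∈ S := by
        refine ⟨θ0 - q0 + Θ*μ + z0 + ε/2, 0, q0, z0, s0, le_rfl, hz0, by linarith, ?_, rfl⟩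
        rw [show q0^2 + Θ^2*σ^2 + (z0 - s0)^2 = (z0 + s0)^2 by linear_combination -h4s]
        exact le_of_eq (Real.sqrt_sq (by positivity))
      have := csInf_le hbdd hmem
      calc sInf S ≤ (θ0 - q0 + Θ*μ + z0 + ε/2) + (1-α)⁻¹ * (0 + s0) := this
        _ = Θ * μ + θ0 + (z0 - q0 + (1-α)⁻¹ * s0) + ε/2 := by ring
        _ = Θ * μ + θ0 + K + ε/2 := by rw [heq]
        _ ≤ Θ * μ + θ0 + K + ε := by linarith
  · exact le_csInf hne hlbd
end

section
/- Let P be a Borel probability measure on ℝ with finite second moment, mean m and variance σ². Then for every β ∈ ℝ, ∫ max(x - β, 0) dP(x) ≤ ((m - β) + Real.sqrt ((m - β)² + σ²)) / 2. -/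
open MeasureTheory

theorem expected_positive_part_moment_bound
    (P : Measure ℝ) [IsProbabilityMeasure P] (m σ : ℝ)
    (h2 : MemLp id 2 P) (hmean : (∫ x, x ∂P) = m)
    (hvar : (∫ x, (x - m) ^ 2 ∂P) = σ ^ 2) :
    ∀ β : ℝ, (∫ x, max (x - β) 0 ∂P) ≤
      ((m - β) + Real.sqrt ((m - β) ^ 2 + σ ^ 2)) / 2 := by
  intro β
  have hid : Integrable (fun x : ℝ => x) P := h2.integrable one_le_two
  have hf2 : MemLp (fun x : ℝ => x - β) 2 P := h2.sub (memLp_const β)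
  have hfi : Integrable (fun x : ℝ => x - β) P := hf2.integrable one_le_two
  have habs : Integrable (fun x : ℝ => |x - β|) P := hfi.abs
  have hm2 : MemLp (fun x : ℝ => x - m) 2 P := h2.sub (memLp_const m)
  have hmi : Integrable (fun x : ℝ => x - m) P := hm2.integrable one_le_two
  have hmsq : Integrable (fun x : ℝ => (x - m) ^ 2) P := hm2.integrable_sq
  -- mean of f
  have hEf : (∫ x, (x - β) ∂P) = m - β := by
    rw [integral_sub hid (integrable_const β), hmean, integral_const]
    simp
  have hEm : (∫ x, (x - m) ∂P) = 0 := by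
    rw [integral_sub hid (integrable_const m), hmean, integral_const]
    simp
  -- second moment of f
  have hEf2 : (∫ x, (x - β) ^ 2 ∂P) = (m - β) ^ 2 + σ ^ 2 := by
    have hexp : ∀ x : ℝ, (x - β) ^ 2
        = (x - m) ^ 2 + ((2 * (m - β)) * (x - m) + (m - β) ^ 2) := by
      intro x; ring
    have e1 : (∫ x, (x - β) ^ 2 ∂P)
        = ∫ x, ((x - m) ^ 2 + ((2 * (m - β)) * (x - m) + (m - β) ^ 2)) ∂P := by
      apply integral_congr_ae; filter_upwards with x using hexp x
    have hi1 : Integrable (fun x : ℝ => 2 * (m - β) * (x - m)) P := hmi.const_mul _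
    have hi2 : Integrable (fun x : ℝ => 2 * (m - β) * (x - m) + (m - β) ^ 2) P :=
      hi1.add (integrable_const _)
    rw [e1, integral_add hmsq hi2, integral_add hi1 (integrable_const _),
      integral_const_mul, hEm, hvar, integral_const]
    simp
    ring
  -- Cauchy-Schwarz: ∫|f| ≤ sqrt(∫ f²)
  have habs_le : (∫ x, |x - β| ∂P) ≤ Real.sqrt ((m - β) ^ 2 + σ ^ 2) := by
    have hvnn := ProbabilityTheory.variance_nonneg (fun x : ℝ => |x - β|) P
    have hvd := ProbabilityTheory.variance_eq_sub (μ := P) hf2.abs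
    have hsq_eq : (∫ x, |x - β| ^ 2 ∂P) = (m - β) ^ 2 + σ ^ 2 := by
      rw [← hEf2]; congr 1; funext x; rw [sq_abs]
    have key : (∫ x, |x - β| ∂P) ^ 2 ≤ (m - β) ^ 2 + σ ^ 2 := by
      have := hvd
      have e : |fun x : ℝ => x - β| = fun x : ℝ => |x - β| := rfl
      rw [e] at this
      simp only [Pi.pow_apply] at this
      rw [e] at hvd
      nlinarith [hvnn, this, hsq_eq]
    have hnn : 0 ≤ (∫ x, |x - β| ∂P) := integral_nonneg fun x => abs_nonneg _
    calc (∫ x, |x - β| ∂P) = Real.sqrt ((∫ x, |x - β| ∂P) ^ 2) := by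
          rw [Real.sqrt_sq hnn]
      _ ≤ Real.sqrt ((m - β) ^ 2 + σ ^ 2) := Real.sqrt_le_sqrt key
  -- max = (f + |f|)/2
  have hmax : (∫ x, max (x - β) 0 ∂P) = ((∫ x, (x - β) ∂P) + ∫ x, |x - β| ∂P) / 2 := by
    rw [← integral_add hfi habs]
    rw [show (fun x : ℝ => (x - β) + |x - β|) = fun x : ℝ => 2 * max (x - β) 0 by
      funext x
      rcases le_total (x - β) 0 with h | h
      · rw [max_eq_right h, abs_of_nonpos h]; ring
      · rw [max_eq_left h, abs_of_nonneg h]; ring]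
    rw [integral_const_mul]
    ring
  rw [hmax, hEf]
  linarith
end

section
/- Let α ∈ (0,1), m ∈ ℝ and σ > 0. Then for every β ∈ ℝ, β + (2(1-α))⁻¹ · ((m - β) + Real.sqrt ((m - β)² + σ²)) ≥ m + σ·Real.sqrt (α/(1-α)), and equality holds at β = m + (2α - 1)·σ/(2·Real.sqrt (α·(1-α))). -/
theorem rockafellar_uryasev_scalar_minimization
    (α m σ : ℝ) (hα : α ∈ Set.Ioo (0 : ℝ) 1) (hσ : 0 < σ) :
    (∀ β : ℝ, m + σ * Real.sqrt (α / (1 - α)) ≤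
        β + (2 * (1 - α))⁻¹ * ((m - β) + Real.sqrt ((m - β) ^ 2 + σ ^ 2))) ∧
    (let β₀ : ℝ := m + (2 * α - 1) * σ / (2 * Real.sqrt (α * (1 - α)));
      β₀ + (2 * (1 - α))⁻¹ * ((m - β₀) + Real.sqrt ((m - β₀) ^ 2 + σ ^ 2)) =
        m + σ * Real.sqrt (α / (1 - α))) := by
  obtain ⟨hα0, hα1⟩ := hα
  have h1α : (0:ℝ) < 1 - α := by linarith
  set s := Real.sqrt (α * (1 - α)) with hs
  have hs0 : 0 < s := Real.sqrt_pos.mpr (by positivity)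
  have hs2 : s ^ 2 = α * (1 - α) := Real.sq_sqrt (by positivity)
  have hroot : Real.sqrt (α / (1 - α)) = s / (1 - α) := by
    have h : α / (1 - α) = (s / (1 - α)) ^ 2 := by
      field_simp
      nlinarith [hs2]
    rw [h, Real.sqrt_sq (by positivity)]
  have key : ∀ t : ℝ, (1 - 2*α) * t + 2 * σ * s ≤ Real.sqrt (t ^ 2 + σ ^ 2) := by
    intro t
    rcases le_or_gt ((1 - 2*α) * t + 2 * σ * s) 0 with h | h
    · exact h.trans (Real.sqrt_nonneg _)
    · rw [show (t:ℝ) ^ 2 + σ ^ 2 = t ^ 2 + σ ^ 2 from rfl]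
      refine (Real.le_sqrt' h).mpr ?_
      nlinarith [sq_nonneg (2*s*t - (1 - 2*α)*σ), hs2]
  constructor
  · intro β
    have hkey := key (m - β)
    have hinv : (0:ℝ) < (2*(1-α))⁻¹ := by positivity
    have h2 : 2*(1-α)*(m-β) + 2*σ*s ≤ (m - β) + Real.sqrt ((m-β)^2 + σ^2) := by
      nlinarith [hkey]
    calc m + σ * Real.sqrt (α/(1-α))
        = β + (2*(1-α))⁻¹ * (2*(1-α)*(m-β) + 2*σ*s) := by
          rw [hroot]; field_simp; ring
      _ ≤ β + (2*(1-α))⁻¹ * ((m - β) + Real.sqrt ((m-β)^2 + σ^2)) := by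
          exact add_le_add_right (mul_le_mul_of_nonneg_left h2 hinv.le) β
  · have ht : m - (m + (2*α-1)*σ/(2*s)) = (1-2*α)*σ/(2*s) := by ring
    have hR : Real.sqrt (((1-2*α)*σ/(2*s))^2 + σ^2) = σ/(2*s) := by
      rw [show ((1-2*α)*σ/(2*s))^2 + σ^2 = (σ/(2*s))^2 by
        field_simp; nlinarith [hs2]]
      exact Real.sqrt_sq (by positivity)
    show (m + (2*α-1)*σ/(2*s)) + (2*(1-α))⁻¹ *
        ((m - (m + (2*α-1)*σ/(2*s))) + Real.sqrt ((m - (m + (2*α-1)*σ/(2*s)))^2 + σ^2))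
        = m + σ * Real.sqrt (α/(1-α))
    rw [ht, hR, hroot]
    field_simp
    linear_combination (-4*σ) * hs2
end

section
/- Let α ∈ (0,1) and let P be a Borel probability measure on ℝ with finite first moment. If there exists β ∈ ℝ such that β + (1-α)⁻¹ · ∫ max(x - β, 0) dP(x) ≤ 0, then P {x : x ≤ 0} ≥ α. -/
open MeasureTheory

theorem cvar_nonpos_implies_chance_constraint
    (α : ℝ) (hα : α ∈ Set.Ioo (0 : ℝ) 1)
    (P : Measure ℝ) [IsProbabilityMeasure P] (h1 : MemLp id 1 P)
    (h : ∃ β : ℝ, β + (1 - α)⁻¹ * (∫ x, max (x - β) 0 ∂P) ≤ 0) :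
    ENNReal.ofReal α ≤ P {x : ℝ | x ≤ 0} := by
  obtain ⟨β, hβ⟩ := h
  have hα0 := hα.1
  have hα1 := hα.2
  have h1α : (0:ℝ) < 1 - α := by linarith
  have hid : Integrable id P := (memLp_one_iff_integrable).mp h1
  have hf : Integrable (fun x => max (x - β) 0) P := by
    have : Integrable (fun x => x - β) P := hid.sub (integrable_const β)
    exact this.pos_part
  have hnn : 0 ≤ ∫ x, max (x - β) 0 ∂P :=
    integral_nonneg (fun x => le_max_right _ _)
  -- key: bound the integral by -β(1-α)
  have hbd : ∫ x, max (x - β) 0 ∂P ≤ (-β) * (1 - α) := by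
    have h2 : (1 - α)⁻¹ * ∫ x, max (x - β) 0 ∂P ≤ -β := by linarith
    have h3 := mul_le_mul_of_nonneg_left h2 h1α.le
    rw [← mul_assoc, mul_inv_cancel₀ h1α.ne', one_mul] at h3
    linarith
  have hβ0 : β ≤ 0 := by nlinarith
  -- show P {x | 0 < x} ≤ ofReal (1 - α)
  have key : (P {x : ℝ | 0 < x}).toReal ≤ 1 - α := by
    rcases eq_or_lt_of_le hβ0 with heq | hlt
    · -- β = 0 : integral of max x 0 is 0, so x ≤ 0 a.e.
      subst heq
      have hint0 : ∫ x, max (x - 0) 0 ∂P = 0 :=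
        le_antisymm (by simpa using hbd) hnn
      have hae : ∀ᵐ x ∂P, max (x - 0) 0 = 0 :=
        (integral_eq_zero_iff_of_nonneg (fun x => le_max_right _ _) hf).mp hint0
      have : P {x : ℝ | 0 < x} = 0 := by
        have : ∀ᵐ x ∂P, ¬ (0 < x) := by
          filter_upwards [hae] with x hx
          intro hx0
          have : max (x - 0) 0 = x := by
            rw [sub_zero]; exact max_eq_left hx0.le
          linarith [this ▸ hx]
        simpa [ae_iff] using this
      rw [this]
      simp
      linarith
    · -- β < 0 : Markov
      have hsub : {x : ℝ | 0 < x} ⊆ {x : ℝ | -β ≤ max (x - β) 0} := by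
        intro x hx
        have : -β ≤ x - β := by simp only [Set.mem_setOf_eq] at hx; linarith
        exact le_trans this (le_max_left _ _)
      have hmarkov : (-β) * (P {x | -β ≤ max (x - β) 0}).toReal ≤
          ∫ x, max (x - β) 0 ∂P :=
        mul_meas_ge_le_integral_of_nonneg
          (Filter.Eventually.of_forall (fun x => le_max_right _ _)) hf (-β)
      have hmono : (P {x : ℝ | 0 < x}).toReal ≤ (P {x | -β ≤ max (x - β) 0}).toReal := by
        apply ENNReal.toReal_mono (measure_ne_top _ _)
        exact measure_mono hsub
      have hβpos : (0:ℝ) < -β := by linarith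
      have : (-β) * (P {x : ℝ | 0 < x}).toReal ≤ (-β) * (1 - α) := by
        calc (-β) * (P {x : ℝ | 0 < x}).toReal
            ≤ (-β) * (P {x | -β ≤ max (x - β) 0}).toReal :=
              mul_le_mul_of_nonneg_left hmono hβpos.le
          _ ≤ ∫ x, max (x - β) 0 ∂P := hmarkov
          _ ≤ (-β) * (1 - α) := hbd
      exact le_of_mul_le_mul_left this hβpos
  -- conclude
  have hcompl : {x : ℝ | x ≤ 0}ᶜ = {x : ℝ | 0 < x} := by
    ext x; simp [not_le]
  have hP : (P {x : ℝ | x ≤ 0}).toReal = 1 - (P {x : ℝ | 0 < x}).toReal := by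
    have := measure_compl (s := {x : ℝ | x ≤ 0}) (measurableSet_le measurable_id measurable_const)
      (measure_ne_top P _)
    rw [hcompl, measure_univ] at this
    rw [show P {x : ℝ | 0 < x} = 1 - P {x : ℝ | x ≤ 0} from this]
    rw [ENNReal.toReal_sub_of_le prob_le_one (by simp)]
    simp
  have : α ≤ (P {x : ℝ | x ≤ 0}).toReal := by rw [hP]; linarith
  calc ENNReal.ofReal α ≤ ENNReal.ofReal (P {x : ℝ | x ≤ 0}).toReal :=
        ENNReal.ofReal_le_ofReal this
    _ = P {x : ℝ | x ≤ 0} := ENNReal.ofReal_toReal (measure_ne_top _ _)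
end

section
/- Let α ∈ (0,1), Θ, θ⁰, μ ∈ ℝ and σ > 0. Then every Borel probability measure P on ℝ with finite second moment, mean μ and variance σ² satisfies P {x : Θx + θ⁰ ≤ 0} ≥ α, if and only if Θμ + θ⁰ + |Θ|·σ·Real.sqrt (α/(1-α)) ≤ 0. -/
open MeasureTheory
open scoped ENNReal

noncomputable def twoPoint (p x1 x2 : ℝ) : Measure ℝ :=
  ENNReal.ofReal p • Measure.dirac x1 + ENNReal.ofReal (1 - p) • Measure.dirac x2

lemma twoPoint_prob {p : ℝ} (x1 x2 : ℝ) (hp : 0 ≤ p) (hp1 : p ≤ 1) :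
    IsProbabilityMeasure (twoPoint p x1 x2) := by
  constructor
  simp only [twoPoint, Measure.add_apply, Measure.smul_apply, smul_eq_mul,
    measure_univ, mul_one]
  rw [← ENNReal.ofReal_add hp (by linarith)]
  norm_num

lemma twoPoint_integral {p : ℝ} (x1 x2 : ℝ) (hp : 0 ≤ p) (hp1 : p ≤ 1) (f : ℝ → ℝ) :
    ∫ x, f x ∂(twoPoint p x1 x2) = p * f x1 + (1 - p) * f x2 := by
  have h1 : Integrable f (Measure.dirac x1) :=
    (integrable_const (f x1)).congr (by rw [MeasureTheory.ae_dirac_eq]; exact Filter.eventually_pure.2 rfl)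
  have h2 : Integrable f (Measure.dirac x2) :=
    (integrable_const (f x2)).congr (by rw [MeasureTheory.ae_dirac_eq]; exact Filter.eventually_pure.2 rfl)
  rw [twoPoint, integral_add_measure (h1.smul_measure ENNReal.ofReal_ne_top)
    (h2.smul_measure ENNReal.ofReal_ne_top), integral_smul_measure, integral_smul_measure,
    integral_dirac, integral_dirac, ENNReal.toReal_ofReal hp,
    ENNReal.toReal_ofReal (by linarith)]
  simp [smul_eq_mul]

lemma twoPoint_apply (p x1 x2 : ℝ) (S : Set ℝ) :
    twoPoint p x1 x2 S =
      ENNReal.ofReal p * S.indicator 1 x1 + ENNReal.ofReal (1 - p) * S.indicator 1 x2 := by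
  simp [twoPoint, Measure.dirac_apply]

lemma twoPoint_memLp {p : ℝ} (x1 x2 : ℝ) (hp : 0 ≤ p) (hp1 : p ≤ 1) :
    MemLp id 2 (twoPoint p x1 x2) := by
  have := twoPoint_prob x1 x2 hp hp1
  refine MemLp.of_bound measurable_id.aestronglyMeasurable (max ‖x1‖ ‖x2‖) ?_
  rw [twoPoint]
  rw [ae_add_measure_iff]
  constructor
  · apply Measure.ae_smul_measure
    rw [MeasureTheory.ae_dirac_eq]
    exact Filter.eventually_pure.2 (le_max_left _ _)
  · apply Measure.ae_smul_measure
    rw [MeasureTheory.ae_dirac_eq]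
    exact Filter.eventually_pure.2 (le_max_right _ _)

set_option maxHeartbeats 2000000 in
theorem drcc_closed_form_equivalence
    (α Θ θ0 μ σ : ℝ) (hα : α ∈ Set.Ioo (0 : ℝ) 1) (hσ : 0 < σ) :
    (∀ P : Measure ℝ, IsProbabilityMeasure P →
        MemLp id 2 P → (∫ x, x ∂P) = μ → (∫ x, (x - μ) ^ 2 ∂P) = σ ^ 2 →
        ENNReal.ofReal α ≤ P {x : ℝ | Θ * x + θ0 ≤ 0}) ↔
    Θ * μ + θ0 + |Θ| * σ * Real.sqrt (α / (1 - α)) ≤ 0 := by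
  obtain ⟨hα0, hα1⟩ := hα
  have h1α : (0:ℝ) < 1 - α := by linarith
  set c : ℝ := Real.sqrt (α / (1 - α)) with hcdef
  have hc0 : 0 < c := Real.sqrt_pos.2 (div_pos hα0 h1α)
  have hc2 : c ^ 2 = α / (1 - α) := Real.sq_sqrt (div_pos hα0 h1α).le
  clear_value c
  have hSm : MeasurableSet {x : ℝ | Θ * x + θ0 ≤ 0} :=
    measurableSet_le (by fun_prop) measurable_const
  constructor
  · -- forward direction, by contradiction
    intro H
    by_contra hR
    push_neg at hR
    by_cases hΘ : Θ = 0
    · -- Θ = 0 : θ0 > 0, any valid P gives P ∅ = 0 < α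
      have hθ0 : 0 < θ0 := by simpa [hΘ] using hR
      have hp : (0:ℝ) ≤ 1/2 := by norm_num
      have hp1 : (1:ℝ)/2 ≤ 1 := by norm_num
      have hmean : (∫ x, x ∂(twoPoint (1/2) (μ + σ) (μ - σ))) = μ := by
        rw [twoPoint_integral _ _ hp hp1 (fun x => x)]; ring
      have hvar : (∫ x, (x - μ)^2 ∂(twoPoint (1/2) (μ + σ) (μ - σ))) = σ^2 := by
        rw [twoPoint_integral _ _ hp hp1 (fun x => (x - μ)^2)]; ring
      have := H _ (twoPoint_prob _ _ hp hp1) (twoPoint_memLp _ _ hp hp1) hmean hvar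
      have hempty : {x : ℝ | Θ * x + θ0 ≤ 0} = ∅ := by
        ext x; simp [hΘ]; linarith
      rw [hempty] at this
      simp only [measure_empty, nonpos_iff_eq_zero] at this
      exact absurd this (ENNReal.ofReal_pos.2 hα0).ne'
    · -- Θ ≠ 0
      set m : ℝ := Θ * μ + θ0 with hmdef
      set s : ℝ := |Θ| * σ with hsdef
      have hs0 : 0 < s := mul_pos (abs_pos.2 hΘ) hσ
      set r : ℝ := max (-m / s) 0 with hrdef
      have hrc : r < c := by
        apply max_lt _ hc0
        rw [div_lt_iff₀ hs0]
        nlinarith [mul_pos hs0 hc0]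
      set u : ℝ := (r + c) / 2 with hudef
      have hu0 : 0 < u := by
        have : (0:ℝ) ≤ r := le_max_right _ _
        simp only [hudef]; linarith
      have hur : r < u := by simp only [hudef]; linarith
      have huc : u < c := by simp only [hudef]; linarith
      have hmu : 0 < m + s * u := by
        have h1 : -m / s < u := lt_of_le_of_lt (le_max_left _ _) hur
        rw [div_lt_iff₀ hs0] at h1
        linarith
      set p : ℝ := 1 / (1 + u^2) with hpdef
      have h1u : (0:ℝ) < 1 + u^2 := by positivity
      have hp0 : 0 ≤ p := by positivity
      have hp1 : p ≤ 1 := by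
        rw [hpdef, div_le_one h1u]; nlinarith
      set e : ℝ := |Θ| / Θ with hedef
      have he2 : e^2 = 1 := by
        rw [hedef, div_pow, sq_abs, div_self (pow_ne_zero 2 hΘ)]
      have heΘ : Θ * e = |Θ| := by
        rw [hedef, mul_div_assoc', mul_comm, mul_div_assoc, div_self hΘ, mul_one]
      set x1 : ℝ := μ + σ * u * e with hx1def
      set x2 : ℝ := μ - σ * (1/u) * e with hx2def
      have hΘx1 : Θ * x1 + θ0 = m + s * u := by
        rw [hx1def, hmdef, hsdef]; rw [mul_add]
        have : Θ * (σ * u * e) = σ * u * (Θ * e) := by ring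
        rw [this, heΘ]; ring
      have hΘx2 : Θ * x2 + θ0 = m - s * (1/u) := by
        rw [hx2def, hmdef, hsdef]
        have : Θ * (μ - σ * (1/u) * e) = Θ * μ - σ * (1/u) * (Θ * e) := by ring
        rw [this, heΘ]; ring
      clear_value x2 x1 e p u r s m
      have hmean : (∫ x, x ∂(twoPoint p x1 x2)) = μ := by
        rw [twoPoint_integral _ _ hp0 hp1 (fun x => x), hx1def, hx2def, hpdef]
        field_simp
        ring
      have hvar : (∫ x, (x - μ)^2 ∂(twoPoint p x1 x2)) = σ^2 := by
        rw [twoPoint_integral _ _ hp0 hp1 (fun x => (x - μ)^2), hx1def, hx2def, hpdef]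
        have : (μ + σ * u * e - μ)^2 = σ^2 * u^2 := by
          have : (μ + σ * u * e - μ)^2 = (σ * u)^2 * e^2 := by ring
          rw [this, he2]; ring
        rw [this]
        have h2 : (μ - σ * (1/u) * e - μ)^2 = σ^2 * (1/u)^2 := by
          have : (μ - σ * (1/u) * e - μ)^2 = (σ * (1/u))^2 * e^2 := by ring
          rw [this, he2]; ring
        rw [h2]
        field_simp
        ring
      have hP := H _ (twoPoint_prob _ _ hp0 hp1) (twoPoint_memLp _ _ hp0 hp1) hmean hvar
      -- but P S ≤ ofReal (1-p) < ofReal α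
      have hx1not : x1 ∉ {x : ℝ | Θ * x + θ0 ≤ 0} := by
        simp only [Set.mem_setOf_eq, hΘx1]; linarith
      have hPS : twoPoint p x1 x2 {x : ℝ | Θ * x + θ0 ≤ 0} ≤ ENNReal.ofReal (1 - p) := by
        rw [twoPoint_apply]
        rw [Set.indicator_of_notMem hx1not]
        have : Set.indicator {x : ℝ | Θ * x + θ0 ≤ 0} (1 : ℝ → ℝ≥0∞) x2 ≤ 1 := by
          classical
          rw [Set.indicator_apply]
          split <;> simp
        rw [mul_zero, zero_add]
        exact le_trans (mul_le_mul_right this _) (by simp)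
      have hlt : ENNReal.ofReal (1 - p) < ENNReal.ofReal α := by
        clear hP hPS hx1not hmean hvar H hSm hΘx1 hΘx2 hx1def hx2def hp0 hp1
        rw [ENNReal.ofReal_lt_ofReal_iff hα0, hpdef]
        have hcα : c^2 * (1 - α) = α := by rw [hc2]; field_simp
        have h1 : u^2 < c^2 := by nlinarith
        have hu2 : u^2 * (1 - α) < α := by
          calc u^2 * (1 - α) < c^2 * (1 - α) := by
                exact mul_lt_mul_of_pos_right h1 h1α
            _ = α := hcα
        have heq : 1 - 1 / (1 + u^2) = u^2 / (1 + u^2) := by field_simp; ring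
        rw [heq, div_lt_iff₀ h1u]
        linarith [hu2]
      exact absurd hP (not_le.2 (lt_of_le_of_lt hPS hlt))
  · -- backward direction
    intro hR P hP hL2 hmean hvar
    by_cases hΘ : Θ = 0
    · have hθ0 : θ0 ≤ 0 := by rw [hΘ] at hR; simpa using hR
      have huniv : {x : ℝ | Θ * x + θ0 ≤ 0} = Set.univ := by
        ext x
        simp only [Set.mem_setOf_eq, hΘ, zero_mul, zero_add, Set.mem_univ, iff_true]
        exact hθ0
      rw [huniv, measure_univ]
      exact ENNReal.ofReal_le_one.2 hα1.le
    · set m : ℝ := Θ * μ + θ0 with hmdef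
      set s : ℝ := |Θ| * σ with hsdef
      have hs0 : 0 < s := mul_pos (abs_pos.2 hΘ) hσ
      have hmsc : m + s * c ≤ 0 := hR
      have hm0 : m < 0 := by nlinarith [mul_pos hs0 hc0]
      set u : ℝ := (s^2 + m^2) / (-m) with hudef
      have hu0 : 0 < u := div_pos (by positivity) (by linarith)
      have hn0 : (0:ℝ) < -m := by linarith
      have e2 : u * (-m) = s^2 + m^2 := by
        rw [hudef]; exact div_mul_cancel₀ _ hn0.ne'
      have e1 : (m + u) * (-m) = s^2 := by linear_combination e2
      clear_value u s m
      -- key inequality: s^2 + (m+u)^2 ≤ (1-α) * u^2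
      have hkey : s^2 + (m + u)^2 ≤ (1 - α) * u^2 := by
        have hcα : c^2 * (1 - α) = α := by rw [hc2]; field_simp
        have hn2 : s^2 * c^2 ≤ m^2 := by
          have h := mul_self_le_mul_self (mul_pos hs0 hc0).le
            (by linarith : s * c ≤ -m)
          nlinarith [h]
        have hαm : α * s^2 ≤ (1 - α) * m^2 := by
          have h1 := mul_le_mul_of_nonneg_left hn2 h1α.le
          have h2 : s^2 * (c^2 * (1 - α)) = s^2 * α := by rw [hcα]
          nlinarith [h1, h2]
        have key2 : (s^2 + (m + u)^2) * m^2 ≤ ((1 - α) * u^2) * m^2 := by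
          have l1 : (s^2 + (m + u)^2) * m^2 = s^2 * m^2 + ((m + u) * (-m))^2 := by ring
          have l2 : ((1 - α) * u^2) * m^2 = (1 - α) * (u * (-m))^2 := by ring
          rw [l1, l2, e1, e2]
          nlinarith [mul_le_mul_of_nonneg_right hαm (sq_nonneg s),
            mul_le_mul_of_nonneg_right hαm (sq_nonneg m)]
        exact le_of_mul_le_mul_right key2 (by nlinarith [hm0])
      -- integrability
      have hf : MemLp (fun x => Θ * x + (θ0 + u)) 2 P := by
        have h1 : MemLp (fun x : ℝ => Θ * x) 2 P := by
          simpa using hL2.const_mul Θ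
        exact h1.add (memLp_const (θ0 + u))
      have hg_int : Integrable (fun x => (Θ * x + (θ0 + u))^2) P := hf.integrable_sq
      have hx_int : Integrable (fun x : ℝ => x) P :=
        hL2.integrable (by norm_num)
      have hf1 : Integrable (fun x : ℝ => x - μ) P := hx_int.sub (integrable_const μ)
      have hf2 : Integrable (fun x : ℝ => (x - μ)^2) P :=
        (hL2.sub (memLp_const μ)).integrable_sq
      have hint1 : (∫ x, (x - μ) ∂P) = 0 := by
        rw [integral_sub hx_int (integrable_const μ), hmean, integral_const]
        simp
      -- compute the integral
      have hgval : (∫ x, (Θ * x + (θ0 + u))^2 ∂P) = s^2 + (m + u)^2 := by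
        have hexp : ∀ x : ℝ, (Θ * x + (θ0 + u))^2
            = Θ^2 * (x - μ)^2 + (2 * Θ * (m + u)) * (x - μ) + (m + u)^2 := by
          intro x; rw [hmdef]; ring
        have hA : Integrable (fun x : ℝ => Θ^2 * (x - μ)^2) P := hf2.const_mul _
        have hB : Integrable (fun x : ℝ => (2 * Θ * (m + u)) * (x - μ)) P := hf1.const_mul _
        have hAB : Integrable (fun x : ℝ => Θ^2 * (x - μ)^2 + (2 * Θ * (m + u)) * (x - μ)) P :=
          hA.add hB
        calc (∫ x, (Θ * x + (θ0 + u))^2 ∂P)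
            = ∫ x, (Θ^2 * (x - μ)^2 + (2 * Θ * (m + u)) * (x - μ) + (m + u)^2) ∂P := by
              exact integral_congr_ae (Filter.Eventually.of_forall hexp)
          _ = (∫ x, (Θ^2 * (x - μ)^2 + (2 * Θ * (m + u)) * (x - μ)) ∂P) + (m + u)^2 := by
              rw [integral_add hAB (integrable_const _), integral_const]
              simp
          _ = Θ^2 * σ^2 + (2 * Θ * (m + u)) * 0 + (m + u)^2 := by
              rw [integral_add hA hB, integral_const_mul, integral_const_mul, hvar, hint1]
          _ = s^2 + (m + u)^2 := by rw [hsdef]; rw [mul_pow, sq_abs]; ring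
      -- Markov
      have hmarkov := mul_meas_ge_le_integral_of_nonneg
        (μ := P) (f := fun x => (Θ * x + (θ0 + u))^2)
        (Filter.Eventually.of_forall (fun x => sq_nonneg _)) hg_int (u^2)
      rw [hgval] at hmarkov
      have hsubset : {x : ℝ | Θ * x + θ0 ≤ 0}ᶜ ⊆ {x : ℝ | u^2 ≤ (Θ * x + (θ0 + u))^2} := by
        intro x hx
        simp only [Set.mem_compl_iff, Set.mem_setOf_eq, not_le] at hx
        simp only [Set.mem_setOf_eq]
        nlinarith
      have hcompl_le : (P {x : ℝ | Θ * x + θ0 ≤ 0}ᶜ).toReal ≤ 1 - α := by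
        have h1 : (P {x : ℝ | Θ * x + θ0 ≤ 0}ᶜ).toReal
            ≤ (P {x : ℝ | u^2 ≤ (Θ * x + (θ0 + u))^2}).toReal := by
          apply ENNReal.toReal_mono (measure_ne_top _ _)
          exact measure_mono hsubset
        have h2 : u^2 * (P {x : ℝ | u^2 ≤ (Θ * x + (θ0 + u))^2}).toReal
            ≤ (1 - α) * u^2 := le_trans hmarkov hkey
        have h2' : u^2 * (P {x : ℝ | u^2 ≤ (Θ * x + (θ0 + u))^2}).toReal
            ≤ u^2 * (1 - α) := by linarith [h2]
        have h3 := le_of_mul_le_mul_left h2' (by positivity : (0:ℝ) < u^2)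
        linarith [h1, h3]
      have hcompl : P {x : ℝ | Θ * x + θ0 ≤ 0}ᶜ ≤ ENNReal.ofReal (1 - α) := by
        rw [ENNReal.le_ofReal_iff_toReal_le (measure_ne_top _ _) h1α.le]
        exact hcompl_le
      have htot : (1 : ℝ≥0∞) ≤ P {x : ℝ | Θ * x + θ0 ≤ 0} + ENNReal.ofReal (1 - α) := by
        calc (1 : ℝ≥0∞) = P Set.univ := (measure_univ).symm
          _ ≤ P {x : ℝ | Θ * x + θ0 ≤ 0} + P {x : ℝ | Θ * x + θ0 ≤ 0}ᶜ := by
              rw [← Set.union_compl_self {x : ℝ | Θ * x + θ0 ≤ 0}]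
              exact measure_union_le _ _
          _ ≤ _ := by gcongr
      have : ENNReal.ofReal α = 1 - ENNReal.ofReal (1 - α) := by
        rw [← ENNReal.ofReal_one, ← ENNReal.ofReal_sub _ h1α.le]
        norm_num
      rw [this, tsub_le_iff_right]
      exact htot
end

section
/- Let α ∈ (0,1), Θ, θ⁰, μ ∈ ℝ and σ > 0, and let P be a Borel probability measure on ℝ with finite second moment, mean μ and variance σ². Then ⨅_{β ∈ ℝ} (β + (1-α)⁻¹ · ∫ max(Θx + θ⁰ - β, 0) dP(x)) ≤ Θμ + θ⁰ + |Θ|·σ·Real.sqrt (α/(1-α)). -/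
open MeasureTheory

private lemma cvar_aux1 (s a b : ℝ) (ha : 0 < a) (hb : 0 < b) (hab : a^2+b^2 = 1) :
    s^2 + (s*(a^2-b^2)/(2*a*b))^2 = (s/(2*a*b))^2 := by
  field_simp
  linear_combination (s^2*(a^2+b^2+1)) * hab

private lemma cvar_aux2 (s a b : ℝ) (ha : 0 < a) (hb : 0 < b) (hab : a^2+b^2 = 1) :
    s*(a^2-b^2)/(2*a*b) + (b^2)⁻¹ * ((-(s*(a^2-b^2)/(2*a*b)) + s/(2*a*b))/2) = s*(a/b) := by
  field_simp
  ring_nf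
  linear_combination (s*(-2*b^2-1)) * hab

set_option maxHeartbeats 1000000 in
theorem cvar_affine_upper_bound
    (α Θ θ0 μ σ : ℝ) (hα : α ∈ Set.Ioo (0 : ℝ) 1) (hσ : 0 < σ)
    (P : Measure ℝ) [IsProbabilityMeasure P] (h2 : MemLp id 2 P)
    (hmean : (∫ x, x ∂P) = μ) (hvar : (∫ x, (x - μ) ^ 2 ∂P) = σ ^ 2) :
    (⨅ β : ℝ, (β + (1 - α)⁻¹ * ∫ x, max (Θ * x + θ0 - β) 0 ∂P)) ≤
      Θ * μ + θ0 + |Θ| * σ * Real.sqrt (α / (1 - α)) := by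
  obtain ⟨hα0, hα1⟩ := hα
  have hb2 : (0:ℝ) < 1 - α := by linarith
  set a := Real.sqrt α with ha_def
  set b := Real.sqrt (1 - α) with hb_def
  have ha : 0 < a := Real.sqrt_pos.mpr hα0
  have hb : 0 < b := Real.sqrt_pos.mpr hb2
  have ha2 : a ^ 2 = α := Real.sq_sqrt hα0.le
  have hb2' : b ^ 2 = 1 - α := Real.sq_sqrt hb2.le
  have habs : a ^ 2 + b ^ 2 = 1 := by rw [ha2, hb2']; ring
  set s : ℝ := |Θ| * σ with hs_def
  have hs : 0 ≤ s := mul_nonneg (abs_nonneg _) hσ.le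
  set d : ℝ := s * (a ^ 2 - b ^ 2) / (2 * a * b) with hd_def
  set β₀ : ℝ := Θ * μ + θ0 + d with hβ₀_def
  clear_value β₀ d s
  -- integrability of x
  have hx1 : Integrable (fun x => x) P := h2.integrable one_le_two
  -- integrability of affine functions and their positive parts
  have hlin : ∀ β : ℝ, Integrable (fun x => Θ * x + θ0 - β) P := by
    intro β
    have h' : Integrable (fun x => Θ * x + (θ0 - β)) P :=
      (hx1.const_mul Θ).add (integrable_const _)
    have heq : (fun x : ℝ => Θ * x + θ0 - β) = (fun x => Θ * x + (θ0 - β)) := by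
      funext x; ring
    rw [heq]; exact h'
  have hEaff : ∀ β : ℝ, (∫ x, (Θ * x + θ0 - β) ∂P) = Θ * μ + θ0 - β := by
    intro β
    have heq : (fun x : ℝ => Θ * x + θ0 - β) = (fun x => Θ * x + (θ0 - β)) := by
      funext x; ring
    rw [heq, integral_add (hx1.const_mul Θ) (integrable_const _), integral_const_mul,
      integral_const, hmean]
    simp only [measure_univ, probReal_univ, ENNReal.toReal_one, smul_eq_mul, one_mul]
    ring
  have hmax : ∀ β : ℝ, Integrable (fun x => max (Θ * x + θ0 - β) 0) P :=
    fun β => (hlin β).pos_part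
  have hy2 : MemLp (fun x => Θ * x + θ0 - β₀) 2 P := by
    have h' : MemLp (fun x => Θ * (id x) + (θ0 - β₀)) 2 P :=
      (h2.const_mul Θ).add (memLp_const (θ0 - β₀))
    have heq : (fun x : ℝ => Θ * x + θ0 - β₀) = (fun x => Θ * (id x) + (θ0 - β₀)) := by
      funext x; simp only [id]; ring
    rw [heq]; exact h'
  have hy1 : Integrable (fun x => Θ * x + θ0 - β₀) P := hlin β₀
  have hyabs : Integrable (fun x => |Θ * x + θ0 - β₀|) P := hy1.abs
  have hysq : Integrable (fun x => (Θ * x + θ0 - β₀) ^ 2) P := hy2.integrable_sq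
  have hEy : (∫ x, (Θ * x + θ0 - β₀) ∂P) = -d := by rw [hEaff β₀, hβ₀_def]; ring
  -- second moment
  have hEy2 : (∫ x, (Θ * x + θ0 - β₀) ^ 2 ∂P) = s ^ 2 + d ^ 2 := by
    have hxm : Integrable (fun x => x - μ) P := hx1.sub (integrable_const μ)
    have hxm2 : Integrable (fun x => (x - μ) ^ 2) P := by
      have h' : MemLp (fun x => (id x : ℝ) - μ) 2 P := h2.sub (memLp_const μ)
      exact h'.integrable_sq
    have hxm2' : Integrable (fun x => Θ ^ 2 * (x - μ) ^ 2) P := hxm2.const_mul _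
    have hI2 : Integrable (fun x => (-2 * Θ * d) * (x - μ)) P := hxm.const_mul _
    have hI3 : Integrable (fun x => (-2 * Θ * d) * (x - μ) + d ^ 2) P :=
      hI2.add (integrable_const _)
    have key : (fun x : ℝ => (Θ * x + θ0 - β₀) ^ 2) =
        (fun x => Θ ^ 2 * (x - μ) ^ 2 + ((-2 * Θ * d) * (x - μ) + d ^ 2)) := by
      funext x; rw [hβ₀_def]; ring
    rw [key, integral_add hxm2' hI3, integral_add hI2 (integrable_const _),
      integral_const_mul, integral_const_mul, integral_const]
    have hEm : (∫ x, (x - μ) ∂P) = 0 := by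
      rw [integral_sub hx1 (integrable_const μ), hmean, integral_const]
      simp
    rw [hvar, hEm]
    have hθs : Θ ^ 2 * σ ^ 2 = s ^ 2 := by rw [hs_def, mul_pow, sq_abs]
    simp only [measure_univ, probReal_univ, ENNReal.toReal_one, smul_eq_mul, one_mul, mul_zero]
    rw [hθs]; ring
  -- E|y| ≤ sqrt(E y²)
  have hEabs : (∫ x, |Θ * x + θ0 - β₀| ∂P) ≤ Real.sqrt (s ^ 2 + d ^ 2) := by
    set A := ∫ x, |Θ * x + θ0 - β₀| ∂P with hA_def
    have hA0 : 0 ≤ A := integral_nonneg fun x => abs_nonneg _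
    have hA2 : A ^ 2 ≤ s ^ 2 + d ^ 2 := by
      have hnn : 0 ≤ ∫ x, (|Θ * x + θ0 - β₀| - A) ^ 2 ∂P :=
        integral_nonneg fun x => sq_nonneg _
      have hIa : Integrable (fun x => (-(2 * A)) * |Θ * x + θ0 - β₀|) P := hyabs.const_mul _
      have hIb : Integrable (fun x => (-(2 * A)) * |Θ * x + θ0 - β₀| + A ^ 2) P :=
        hIa.add (integrable_const _)
      have hexp : (∫ x, (|Θ * x + θ0 - β₀| - A) ^ 2 ∂P) =
          (s ^ 2 + d ^ 2) - 2 * A * A + A ^ 2 := by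
        have key : (fun x : ℝ => (|Θ * x + θ0 - β₀| - A) ^ 2) =
            (fun x => (Θ * x + θ0 - β₀) ^ 2 + ((-(2 * A)) * |Θ * x + θ0 - β₀| + A ^ 2)) := by
          funext x; rw [sub_sq, sq_abs]; ring
        rw [key, integral_add hysq hIb, integral_add hIa (integrable_const _),
          integral_const_mul, integral_const, hEy2, ← hA_def]
        simp only [measure_univ, probReal_univ, ENNReal.toReal_one, smul_eq_mul, one_mul]
        ring
      nlinarith [hnn, hexp]
    calc A = Real.sqrt (A ^ 2) := (Real.sqrt_sq hA0).symm
    _ ≤ Real.sqrt (s ^ 2 + d ^ 2) := Real.sqrt_le_sqrt hA2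
  -- sqrt(s² + d²) = s / (2ab)
  have hsqrt : Real.sqrt (s ^ 2 + d ^ 2) = s / (2 * a * b) := by
    rw [show s ^ 2 + d ^ 2 = (s / (2 * a * b)) ^ 2 from by
        rw [hd_def]; exact cvar_aux1 s a b ha hb habs,
      Real.sqrt_sq (div_nonneg hs (by positivity))]
  -- sqrt(α/(1-α)) = a / b
  have hsqrt2 : Real.sqrt (α / (1 - α)) = a / b := by
    rw [show α / (1 - α) = (a / b) ^ 2 by rw [div_pow, ha2, hb2'],
      Real.sqrt_sq (by positivity)]
  -- the integral of the positive part at β₀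
  have hmaxint : (∫ x, max (Θ * x + θ0 - β₀) 0 ∂P) =
      ((-d) + ∫ x, |Θ * x + θ0 - β₀| ∂P) / 2 := by
    have key : (fun x : ℝ => max (Θ * x + θ0 - β₀) 0) =
        (fun x => (2:ℝ)⁻¹ * ((Θ * x + θ0 - β₀) + |Θ * x + θ0 - β₀|)) := by
      funext x
      rcases le_total (Θ * x + θ0 - β₀) 0 with h | h
      · rw [max_eq_right h, abs_of_nonpos h]; ring
      · rw [max_eq_left h, abs_of_nonneg h]; ring
    rw [key, integral_const_mul, integral_add hy1 hyabs, hEy]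
    ring
  -- the infimum is bounded below
  have hbdd : BddBelow (Set.range fun β : ℝ =>
      β + (1 - α)⁻¹ * ∫ x, max (Θ * x + θ0 - β) 0 ∂P) := by
    refine ⟨Θ * μ + θ0, ?_⟩
    rintro _ ⟨β, rfl⟩
    have h1 : (∫ x, (Θ * x + θ0 - β) ∂P) ≤ ∫ x, max (Θ * x + θ0 - β) 0 ∂P :=
      integral_mono (hlin β) (hmax β) (fun x => le_max_left _ _)
    rw [hEaff β] at h1
    have h3 : (0:ℝ) ≤ ∫ x, max (Θ * x + θ0 - β) 0 ∂P :=
      integral_nonneg fun x => le_max_right _ _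
    have h4 : (1:ℝ) ≤ (1 - α)⁻¹ := by
      have hmi : (1 - α) * (1 - α)⁻¹ = 1 := mul_inv_cancel₀ hb2.ne'
      nlinarith [inv_pos.mpr hb2, hmi]
    nlinarith [h1, h3, h4]
  have hinf : (⨅ β : ℝ, (β + (1 - α)⁻¹ * ∫ x, max (Θ * x + θ0 - β) 0 ∂P)) ≤
      β₀ + (1 - α)⁻¹ * ∫ x, max (Θ * x + θ0 - β₀) 0 ∂P := ciInf_le hbdd β₀
  refine hinf.trans ?_
  rw [hmaxint, hsqrt2]
  have hstep : (∫ x, |Θ * x + θ0 - β₀| ∂P) ≤ s / (2 * a * b) := hsqrt ▸ hEabs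
  have hfin : β₀ + (1 - α)⁻¹ * ((-d + s / (2 * a * b)) / 2) = Θ * μ + θ0 + s * (a / b) := by
    have h := cvar_aux2 s a b ha hb habs
    rw [hβ₀_def, hd_def, ← hb2']
    linarith [h]
  have hcoef : (0:ℝ) < (1 - α)⁻¹ := by positivity
  have hmono : (1 - α)⁻¹ * ((-d + ∫ x, |Θ * x + θ0 - β₀| ∂P) / 2) ≤
      (1 - α)⁻¹ * ((-d + s / (2 * a * b)) / 2) := by
    apply mul_le_mul_of_nonneg_left _ hcoef.le
    linarith
  linarith [hmono, hfin]
end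

section
/- Let α ∈ (0,1), Θ, θ⁰, μ ∈ ℝ and σ > 0. If (β, e, q, z, s) ∈ ℝ⁵ satisfies e ≥ 0, z > 0, e - θ⁰ + β + q - Θμ - z > 0, and Real.sqrt (q² + Θ²σ² + (z - s)²) ≤ z + s, then β + (1-α)⁻¹·(e + s) ≥ Θμ + θ⁰ + |Θ|·σ·Real.sqrt (α/(1-α)). -/
theorem socp_weak_duality
    (α Θ θ0 μ σ : ℝ) (hα : α ∈ Set.Ioo (0 : ℝ) 1) (hσ : 0 < σ)
    (β e q z s : ℝ) (he : 0 ≤ e) (hz : 0 < z)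
    (hcone : 0 < e - θ0 + β + q - Θ * μ - z)
    (hsoc : Real.sqrt (q ^ 2 + Θ ^ 2 * σ ^ 2 + (z - s) ^ 2) ≤ z + s) :
    Θ * μ + θ0 + |Θ| * σ * Real.sqrt (α / (1 - α)) ≤
      β + (1 - α)⁻¹ * (e + s) := by
  obtain ⟨hα0, hα1⟩ := hα
  have h1α : 0 < 1 - α := by linarith
  set k := Real.sqrt (α / (1 - α)) with hkdef
  have hk0 : 0 ≤ k := Real.sqrt_nonneg _
  have hk2 : k ^ 2 = α / (1 - α) := Real.sq_sqrt (by positivity)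
  have hk3 : (1 - α) ^ 2 * k ^ 2 = (1 - α) * α := by
    rw [hk2]; field_simp
  have hX : 0 ≤ q ^ 2 + Θ ^ 2 * σ ^ 2 + (z - s) ^ 2 := by positivity
  have hsq : q ^ 2 + Θ ^ 2 * σ ^ 2 + (z - s) ^ 2 ≤ (z + s) ^ 2 := by
    have h := Real.sq_sqrt hX
    nlinarith [Real.sqrt_nonneg (q ^ 2 + Θ ^ 2 * σ ^ 2 + (z - s) ^ 2)]
  have h4 : q ^ 2 + Θ ^ 2 * σ ^ 2 ≤ 4 * z * s := by nlinarith
  have habs : Θ ^ 2 = |Θ| ^ 2 := (sq_abs Θ).symm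
  have hk4 : 4 * z ^ 2 * ((1 - α) ^ 2 * k ^ 2) = 4 * z ^ 2 * ((1 - α) * α) := by
    rw [hk3]
  have hc2 : 0 < 4 * z * (1 - α) * (e - θ0 + β + q - Θ * μ - z) := by
    apply mul_pos (by positivity) hcone
  have hae : 0 ≤ 4 * z * (α * e) := by positivity
  have key4 : 4 * z * ((1 - α) * (Θ * μ + θ0 + |Θ| * σ * k)) ≤
      4 * z * ((1 - α) * β + (e + s)) := by
    nlinarith [sq_nonneg (q - 2 * z * (1 - α)),
      sq_nonneg (2 * z * (1 - α) * k - |Θ| * σ), hk4, hc2, hae, h4, habs]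
  have key : (1 - α) * (Θ * μ + θ0 + |Θ| * σ * k) ≤ (1 - α) * β + (e + s) :=
    (mul_le_mul_iff_right₀ (by positivity : (0:ℝ) < 4 * z)).mp key4
  have h2 : Θ * μ + θ0 + |Θ| * σ * k = (1 - α)⁻¹ * ((1 - α) * (Θ * μ + θ0 + |Θ| * σ * k)) := by
    field_simp
  have h3 : β + (1 - α)⁻¹ * (e + s) = (1 - α)⁻¹ * ((1 - α) * β + (e + s)) := by
    field_simp
  rw [h2, h3]
  exact mul_le_mul_of_nonneg_left key (by positivity)
end
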